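/- arXiv:1511.03465 — 4 statements merged into one kernel-verified Lean document; each statement's English description precedes it below -/
import Mathlib

section
/- Let p ≠ q be primes. The image of ℚ[x] in C(ℤ_q, ℤ_p) (each polynomial f ∈ ℚ[x] ∩ Int(ℤ_q, ℤ_p)-valued viewed as a function on ℤ_q with values in ℤ_p, when defined) is not dense in C(ℤ_q, ℤ_p) for the uniform convergence topology. In particular, the characteristic function of qℤ_q (as a map ℤ_q → ℤ_p) cannot be uniformly approximated modulo pℤ_p by any polynomial with rational coefficients. -/
open Polynomial Filter

/-- If `p ≠ q` are primes, no rational polynomial approximates the characteristic function of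
`qℤ_q` uniformly modulo `pℤ_p` on the rational points of `ℤ_q`. -/
lemma aux_key_lemma (p q : ℕ) [Fact p.Prime] [Fact q.Prime] (hpq : p ≠ q) :
    ∀ f : Polynomial ℚ, ¬ ∀ x : ℚ, ‖(x : ℚ_[q])‖ ≤ 1 →
        ‖(Polynomial.aeval ((x : ℚ) : ℚ_[p])) f
            - (if ‖(x : ℚ_[q])‖ < 1 then 1 else 0)‖ < 1 := by
  intro f hf
  have hq1 : ‖((p : ℕ) : ℚ_[q])‖ = 1 := by
    apply le_antisymm
    · simpa using Padic.norm_int_le_one (p := q) (p : ℤ)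
    · by_contra h
      push_neg at h
      have hd := (Padic.norm_intCast_lt_one_iff (p := q) (k := (p : ℤ))).mp (by simpa using h)
      have := Int.natCast_dvd_natCast.mp hd
      exact hpq ((Nat.prime_dvd_prime_iff_eq (Fact.out) (Fact.out)).mp this).symm
  have hk : ∀ k : ℕ, ‖(Polynomial.aeval ((((p : ℚ) ^ k : ℚ)) : ℚ_[p])) f‖ ≤ (p : ℝ)⁻¹ := by
    intro k
    have hx : ‖(((p : ℚ) ^ k : ℚ) : ℚ_[q])‖ ≤ 1 := by
      push_cast
      rw [norm_pow, hq1, one_pow]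
    have h1 := hf ((p : ℚ) ^ k) hx
    rw [if_neg (by push_cast; rw [norm_pow, hq1, one_pow]; exact lt_irrefl 1), sub_zero] at h1
    have h2 := (Padic.norm_le_pow_iff_norm_lt_pow_add_one
      ((Polynomial.aeval (((p : ℚ) ^ k : ℚ) : ℚ_[p])) f) (-1)).mpr (by simpa using h1)
    simpa [zpow_neg_one] using h2
  have h0 := hf 0 (by simp)
  rw [if_pos (by simp)] at h0
  simp only [Rat.cast_zero] at h0
  have hpow : Tendsto (fun k : ℕ => (((p : ℕ) : ℚ_[p])) ^ k) atTop (nhds 0) := by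
    apply tendsto_pow_atTop_nhds_zero_of_norm_lt_one
    rw [Padic.norm_p]
    exact inv_lt_one_of_one_lt₀ (by exact_mod_cast (Fact.out : p.Prime).one_lt)
  have hcont : Continuous fun y : ℚ_[p] => (Polynomial.aeval y) f :=
    Polynomial.continuous_aeval f
  have htt : Tendsto (fun k : ℕ => (Polynomial.aeval ((((p : ℕ)) : ℚ_[p]) ^ k)) f)
      atTop (nhds ((Polynomial.aeval (0 : ℚ_[p])) f)) := by
    exact (hcont.tendsto 0).comp hpow
  have hlim : ‖(Polynomial.aeval (0 : ℚ_[p])) f‖ ≤ (p : ℝ)⁻¹ := by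
    apply le_of_tendsto (htt.norm)
    filter_upwards with k
    have := hk k
    have hcast : ((((p : ℚ) ^ k : ℚ)) : ℚ_[p]) = (((p : ℕ)) : ℚ_[p]) ^ k := by push_cast; ring
    rwa [hcast] at this
  have hlt : ‖(Polynomial.aeval (0 : ℚ_[p])) f‖ < 1 :=
    lt_of_le_of_lt hlim (inv_lt_one_of_one_lt₀ (by exact_mod_cast (Fact.out : p.Prime).one_lt))
  have hmax : ‖(1 : ℚ_[p])‖ ≤ max ‖(Polynomial.aeval (0 : ℚ_[p])) f‖
      ‖(Polynomial.aeval (0 : ℚ_[p])) f - 1‖ := by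
    have h2 := Padic.nonarchimedean ((Polynomial.aeval (0 : ℚ_[p])) f)
      (-((Polynomial.aeval (0 : ℚ_[p])) f - 1))
    have h1 : (Polynomial.aeval (0 : ℚ_[p])) f
        + (-((Polynomial.aeval (0 : ℚ_[p])) f - 1)) = 1 := by ring
    rwa [h1, norm_neg] at h2
  have : ‖(1 : ℚ_[p])‖ < 1 := lt_of_le_of_lt hmax (max_lt hlt h0)
  simp at this

/-- The open unit ball in `ℤ_q` (i.e. `qℤ_q`) is clopen. -/
lemma aux_clopen_ball (q : ℕ) [Fact q.Prime] : IsClopen {x : ℤ_[q] | ‖x‖ < 1} := by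
  constructor
  · have h : {x : ℤ_[q] | ‖x‖ < 1} = {x : ℤ_[q] | ‖x‖ ≤ (q : ℝ)⁻¹} := by
      ext x
      simp only [Set.mem_setOf_eq]
      have := PadicInt.norm_le_pow_iff_norm_lt_pow_add_one x (-1)
      simp only [neg_add_cancel, zpow_zero, zpow_neg_one] at this
      exact this.symm
    rw [h]
    exact isClosed_le continuous_norm continuous_const
  · exact isOpen_lt continuous_norm continuous_const

/-- The characteristic function of `qℤ_q` as a continuous map `ℤ_q → ℤ_p`. -/
noncomputable def auxChi (p q : ℕ) [Fact p.Prime] [Fact q.Prime] : C(ℤ_[q], ℤ_[p]) :=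
  ⟨fun x => if ‖x‖ < 1 then 1 else 0, by
    apply Continuous.if ?_ continuous_const continuous_const
    intro a ha
    rw [(aux_clopen_ball q).frontier_eq] at ha
    exact absurd ha (Set.notMem_empty a)⟩

/-- Let `p ≠ q` be primes. The set of continuous functions `ℤ_q → ℤ_p` that
agree with some rational polynomial on the rational points of `ℤ_q` is not dense in
`C(ℤ_q, ℤ_p)` (compact-open = uniform convergence topology, since `ℤ_q` is compact).
In particular, the characteristic function of `qℤ_q = {x : |x|_q < 1}` cannot be uniformly
approximated modulo `pℤ_p` by any rational polynomial. -/
theorem polynomials_not_dense_in_C_Zq_Zp (p q : ℕ) [Fact p.Prime] [Fact q.Prime]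
    (hpq : p ≠ q) :
    ¬ Dense {F : C(ℤ_[q], ℤ_[p]) | ∃ f : Polynomial ℚ,
          ∀ x : ℚ, ∀ hx : ‖(x : ℚ_[q])‖ ≤ 1,
            ((F ⟨(x : ℚ_[q]), hx⟩ : ℤ_[p]) : ℚ_[p]) = (Polynomial.aeval ((x : ℚ) : ℚ_[p])) f}
      ∧ ∀ f : Polynomial ℚ, ¬ ∀ x : ℚ, ‖(x : ℚ_[q])‖ ≤ 1 →
          ‖(Polynomial.aeval ((x : ℚ) : ℚ_[p])) f
              - (if ‖(x : ℚ_[q])‖ < 1 then 1 else 0)‖ < 1 := by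
  refine ⟨fun hd => ?_, aux_key_lemma p q hpq⟩
  have key := aux_key_lemma p q hpq
  set chi := auxChi p q with hchidef
  have hchi : ∀ x : ℤ_[q], chi x = if ‖x‖ < 1 then 1 else 0 := fun x => rfl
  have hmem := hd.closure_eq ▸ Set.mem_univ chi
  rw [Metric.mem_closure_iff] at hmem
  obtain ⟨F, ⟨f, hFf⟩, hdist⟩ := hmem 1 one_pos
  apply key f
  intro x hx
  have h1 : dist (chi ⟨(x : ℚ_[q]), hx⟩) (F ⟨(x : ℚ_[q]), hx⟩) ≤ dist chi F :=
    ContinuousMap.dist_apply_le_dist _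
  have h2 : dist (chi ⟨(x : ℚ_[q]), hx⟩) (F ⟨(x : ℚ_[q]), hx⟩) < 1 := lt_of_le_of_lt h1 hdist
  rw [dist_comm, dist_eq_norm, PadicInt.norm_def] at h2
  rw [← hFf x hx]
  have h3 : ((chi ⟨(x : ℚ_[q]), hx⟩ : ℤ_[p]) : ℚ_[p]) = (if ‖(x : ℚ_[q])‖ < 1 then 1 else 0) := by
    rw [hchi ⟨(x : ℚ_[q]), hx⟩]
    split_ifs with h1 h2 h3
    · simp
    · exact absurd h1 h2
    · exact absurd h3 h1
    · simp
  rw [← h3]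
  have h4 : ((F ⟨(x : ℚ_[q]), hx⟩ : ℤ_[p]) : ℚ_[p]) - ((chi ⟨(x : ℚ_[q]), hx⟩ : ℤ_[p]) : ℚ_[p])
      = ((F ⟨(x : ℚ_[q]), hx⟩ - chi ⟨(x : ℚ_[q]), hx⟩ : ℤ_[p]) : ℚ_[p]) := by push_cast; ring
  rw [h4]
  exact h2
end

section
/- Let E = ∏_p E_p ⊆ Ẑ be compact, and suppose for each prime p that E_p is infinite so that I_n(E_p) = p^{-n_p} ℤ_(p) for some integer n_p ≥ 0. Then I_n(E) = Σ_p p^{-n_p} ℤ (the ℤ-submodule of ℚ generated by all p^{-n_p}). In particular, I_n(E) is a fractional ideal of ℤ if and only if n_p = 0 for all but finitely many p, in which case I_n(E) = (∏_p p^{n_p})^{-1} ℤ. -/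
open Polynomial

instance (p : Nat.Primes) : Fact (p : ℕ).Prime := ⟨p.2⟩

/-- `Ẑ = ∏_p ℤ_p`, the profinite completion of `ℤ` (product model). -/
abbrev Zhat : Type := ∀ p : Nat.Primes, ℤ_[(p : ℕ)]

/-- `Int_ℚ(E, Ẑ) = {f ∈ ℚ[x] : f(α_p) ∈ ℤ_p for all (α_p)_p ∈ E and all primes p}`. -/
def IntQ (E : Set Zhat) : Set (Polynomial ℚ) :=
  {f | ∀ α ∈ E, ∀ p : Nat.Primes, ‖(Polynomial.aeval ((α p : ℚ_[(p : ℕ)]))) f‖ ≤ 1}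

/-- `Int_ℚ(E_p, ℤ_p) = {f ∈ ℚ[x] : f(E_p) ⊆ ℤ_p}`. -/
def IntQp (p : Nat.Primes) (S : Set ℤ_[(p : ℕ)]) : Set (Polynomial ℚ) :=
  {f | ∀ x ∈ S, ‖(Polynomial.aeval ((x : ℚ_[(p : ℕ)]))) f‖ ≤ 1}
/-- The `n`-th characteristic `ℤ`-module of `Int_ℚ(E, Ẑ)`: leading coefficients of its
elements of degree `≤ n` (with `lc 0 = 0` by convention). -/
def In (E : Set Zhat) (n : ℕ) : Set ℚ :=
  {c | ∃ f ∈ IntQ E, f.degree ≤ (n : ℕ) ∧ f.leadingCoeff = c}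

/-- The `n`-th characteristic module of `Int_ℚ(E_p, ℤ_p)`. -/
def Inp (p : Nat.Primes) (S : Set ℤ_[(p : ℕ)]) (n : ℕ) : Set ℚ :=
  {c | ∃ f ∈ IntQp p S, f.degree ≤ (n : ℕ) ∧ f.leadingCoeff = c}
lemma zero_mem_In (E : Set Zhat) (n : ℕ) : (0:ℚ) ∈ In E n :=
  ⟨0, fun α _ p => by simp, by simp, by simp⟩

lemma one_mem_In (E : Set Zhat) (n : ℕ) : (1:ℚ) ∈ In E n := by
  refine ⟨X ^ n, fun α _ p => ?_, by simpa using degree_X_pow_le n, by simp⟩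
  rw [map_pow, aeval_X, norm_pow]
  exact pow_le_one₀ (norm_nonneg _) (α p).2

lemma IntQ_mul_X_pow {E : Set Zhat} {f : Polynomial ℚ} (hf : f ∈ IntQ E) (k : ℕ) :
    f * X ^ k ∈ IntQ E := by
  intro α hα p
  rw [map_mul, map_pow, aeval_X, norm_mul, norm_pow]
  have h1 := hf α hα p
  have h2 : ‖((α p : ℚ_[(p : ℕ)]))‖ ^ k ≤ 1 := pow_le_one₀ (norm_nonneg _) (α p).2
  calc ‖(aeval ((α p : ℚ_[(p : ℕ)]))) f‖ * ‖((α p : ℚ_[(p : ℕ)]))‖ ^ k ≤ 1 * 1 :=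
        mul_le_mul h1 h2 (by positivity) zero_le_one
    _ = 1 := one_mul 1

lemma In_add {E : Set Zhat} {n : ℕ} {a b : ℚ} (ha : a ∈ In E n) (hb : b ∈ In E n) :
    a + b ∈ In E n := by
  rcases eq_or_ne (a + b) 0 with h | hab
  · rw [h]; exact zero_mem_In E n
  rcases eq_or_ne a 0 with rfl | ha0
  · simpa using hb
  rcases eq_or_ne b 0 with rfl | hb0
  · simpa using ha
  obtain ⟨f, hf, hfd, hfc⟩ := ha
  obtain ⟨g, hg, hgd, hgc⟩ := hb
  have hfn : f.natDegree ≤ n := natDegree_le_iff_degree_le.mpr hfd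
  have hgn : g.natDegree ≤ n := natDegree_le_iff_degree_le.mpr hgd
  set F : Polynomial ℚ := f * X ^ (n - f.natDegree) + g * X ^ (n - g.natDegree) with hF
  have hFmem : F ∈ IntQ E := by
    intro α hα p
    rw [map_add]
    refine le_trans (Padic.nonarchimedean _ _) (max_le ?_ ?_)
    · exact IntQ_mul_X_pow hf _ α hα p
    · exact IntQ_mul_X_pow hg _ α hα p
  have hcoefff : (f * X ^ (n - f.natDegree)).coeff n = a := by
    have e : f.natDegree + (n - f.natDegree) = n := Nat.add_sub_cancel' hfn
    have h := coeff_mul_X_pow f (n - f.natDegree) f.natDegree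
    rw [e] at h
    rw [h, ← hfc, leadingCoeff]
  have hcoeffg : (g * X ^ (n - g.natDegree)).coeff n = b := by
    have e : g.natDegree + (n - g.natDegree) = n := Nat.add_sub_cancel' hgn
    have h := coeff_mul_X_pow g (n - g.natDegree) g.natDegree
    rw [e] at h
    rw [h, ← hgc, leadingCoeff]
  have hcn : F.coeff n = a + b := by rw [hF, coeff_add, hcoefff, hcoeffg]
  have hFn : F.natDegree ≤ n := by
    refine le_trans (natDegree_add_le _ _) (max_le ?_ ?_) <;>
    · refine le_trans (natDegree_mul_le) ?_
      rw [natDegree_X_pow]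
      omega
  have hFn' : n ≤ F.natDegree := le_natDegree_of_ne_zero (hcn ▸ hab)
  have hFdeg : F.natDegree = n := le_antisymm hFn hFn'
  refine ⟨F, hFmem, ?_, ?_⟩
  · exact le_trans (degree_le_natDegree) (by rw [hFdeg])
  · rw [leadingCoeff, hFdeg, hcn]

lemma In_smul {E : Set Zhat} {n : ℕ} (m : ℤ) {a : ℚ} (ha : a ∈ In E n) :
    (m : ℚ) * a ∈ In E n := by
  rcases eq_or_ne (m : ℚ) 0 with h | hm
  · rw [h, zero_mul]; exact zero_mem_In E n
  obtain ⟨f, hf, hfd, hfc⟩ := ha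
  refine ⟨C (m : ℚ) * f, ?_, ?_, ?_⟩
  · intro α hα p
    rw [map_mul, aeval_C, norm_mul]
    have h1 : ‖algebraMap ℚ ℚ_[(p : ℕ)] ((m : ℚ))‖ ≤ 1 := by
      rw [map_intCast]
      exact Padic.norm_int_le_one m
    simpa using mul_le_mul h1 (hf α hα p) (norm_nonneg _) zero_le_one
  · refine le_trans (degree_mul_le _ _) ?_
    rw [degree_C hm, zero_add]
    exact hfd
  · rw [leadingCoeff_mul, leadingCoeff_C, hfc]

/-- `In E n` as a `ℤ`-submodule of `ℚ`. -/
def InMod (E : Set Zhat) (n : ℕ) : Submodule ℤ ℚ where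
  carrier := In E n
  zero_mem' := zero_mem_In E n
  add_mem' := In_add
  smul_mem' := fun m x hx => by simpa [zsmul_eq_mul] using In_smul m hx

lemma IntQ_subset_IntQp {Ep : ∀ p : Nat.Primes, Set ℤ_[(p : ℕ)]}
    (hinf : ∀ p, (Ep p).Infinite) {f : Polynomial ℚ}
    (hf : f ∈ IntQ (Set.univ.pi Ep)) (p : Nat.Primes) : f ∈ IntQp p (Ep p) := by
  classical
  intro x hx
  set α : Zhat := Function.update (fun q => ((hinf q).nonempty).some) p x with hα
  have hmem : α ∈ Set.univ.pi Ep := by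
    intro q _
    rcases eq_or_ne q p with rfl | h
    · simpa [α, Function.update_self] using hx
    · simpa [α, Function.update_of_ne h] using ((hinf q).nonempty).some_mem
  have := hf α hmem p
  simpa [α, Function.update_self] using this

lemma norm_prime_ne {p q : Nat.Primes} (h : q ≠ p) : ‖((p : ℕ) : ℚ_[(q : ℕ)])‖ = 1 := by
  have hle : ‖(((p : ℕ) : ℤ) : ℚ_[(q : ℕ)])‖ ≤ 1 := Padic.norm_int_le_one _
  have hne : ¬ ‖(((p : ℕ) : ℤ) : ℚ_[(q : ℕ)])‖ < 1 := by
    rw [Padic.norm_intCast_lt_one_iff]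
    intro hdvd
    have : (q : ℕ) ∣ (p : ℕ) := Int.ofNat_dvd.mp hdvd
    exact h (Subtype.ext ((Nat.prime_dvd_prime_iff_eq q.2 p.2).mp this))
  push_cast at hle hne ⊢
  exact le_antisymm hle (not_lt.mp hne)

lemma exists_int_of_den_dvd {d : ℚ} {N : ℕ} (h : d.den ∣ N) :
    ∃ z : ℤ, (N : ℚ) * d = (z : ℚ) := by
  obtain ⟨t, ht⟩ := h
  refine ⟨t * d.num, ?_⟩
  have hden : (d.den : ℚ) * d = (d.num : ℚ) := by
    rw [mul_comm]
    exact_mod_cast Rat.mul_den_eq_num d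
  rw [ht]
  push_cast
  rw [mul_comm (d.den : ℚ) (t : ℚ), mul_assoc, hden]

lemma exists_nat_mul_mem (Ep : ∀ p : Nat.Primes, Set ℤ_[(p : ℕ)]) (n : ℕ)
    (p : Nat.Primes) {c : ℚ} {f : Polynomial ℚ}
    (hf : f ∈ IntQp p (Ep p)) (hfd : f.degree ≤ (n : ℕ)) (hfc : f.leadingCoeff = c) :
    ∃ M : ℕ, M ≠ 0 ∧ ¬ (p : ℕ) ∣ M ∧ (M : ℚ) * c ∈ In (Set.univ.pi Ep) n := by
  classical
  set N : ℕ := ∏ i ∈ f.support, (f.coeff i).den with hN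
  have hNpos : 0 < N := Finset.prod_pos fun i _ => (f.coeff i).pos
  set k : ℕ := N.factorization (p : ℕ) with hk
  set M : ℕ := N / (p : ℕ) ^ k with hM
  have hNM : (p : ℕ) ^ k * M = N := Nat.ordProj_mul_ordCompl_eq_self N (p : ℕ)
  have hMpos : 0 < M := Nat.ordCompl_pos (p : ℕ) hNpos.ne'
  have hpM : ¬ (p : ℕ) ∣ M := Nat.not_dvd_ordCompl p.2 hNpos.ne'
  have hcoeff : ∀ (q : Nat.Primes), q ≠ p → ∀ i,
      ‖((((M : ℚ) * f.coeff i) : ℚ) : ℚ_[(q : ℕ)])‖ ≤ 1 := by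
    intro q hq i
    by_cases hi : i ∈ f.support
    · obtain ⟨z, hz⟩ := exists_int_of_den_dvd
        (Finset.dvd_prod_of_mem (fun j => (f.coeff j).den) hi)
      have hMc : ((M : ℚ) * f.coeff i) * ((p : ℕ) : ℚ) ^ k = (z : ℚ) := by
        rw [mul_comm (M : ℚ) (f.coeff i), mul_assoc, mul_comm (M:ℚ), ← Nat.cast_pow, ← Nat.cast_mul, hNM, mul_comm (f.coeff i)]
        exact hz
      have hcast : ((((M : ℚ) * f.coeff i) : ℚ) : ℚ_[(q : ℕ)]) * ((p : ℕ) : ℚ_[(q : ℕ)]) ^ k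
          = ((z : ℤ) : ℚ_[(q : ℕ)]) := by exact_mod_cast congrArg (fun r : ℚ => (r : ℚ_[(q : ℕ)])) hMc
      have := Padic.norm_int_le_one (p := (q : ℕ)) z
      rw [← hcast, norm_mul, norm_pow, norm_prime_ne hq] at this
      simpa using this
    · rw [notMem_support_iff.mp hi]
      simp
  refine ⟨M, hMpos.ne', hpM, ?_⟩
  refine ⟨C (M : ℚ) * f, ?_, ?_, ?_⟩
  · intro α hα q
    rcases eq_or_ne q p with rfl | hq
    · rw [map_mul, aeval_C, norm_mul]
      have h1 : ‖algebraMap ℚ ℚ_[(q : ℕ)] ((M : ℚ))‖ ≤ 1 := by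
        rw [map_natCast]
        exact_mod_cast Padic.norm_int_le_one (p := (q : ℕ)) (M : ℤ)
      simpa using mul_le_mul h1 (hf (α q) (hα q (Set.mem_univ q))) (norm_nonneg _) zero_le_one
    · rw [aeval_eq_sum_range]
      refine IsUltrametricDist.norm_sum_le_of_forall_le_of_nonneg zero_le_one ?_
      intro i _
      rw [Algebra.smul_def]
      have h1 : ‖algebraMap ℚ ℚ_[(q : ℕ)] ((C (M : ℚ) * f).coeff i)‖ ≤ 1 := by
        rw [eq_ratCast, coeff_C_mul]
        exact hcoeff q hq i
      have h2 : ‖((α q : ℚ_[(q : ℕ)]))‖ ^ i ≤ 1 := pow_le_one₀ (norm_nonneg _) (α q).2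
      rw [norm_mul, norm_pow]
      simpa using mul_le_mul h1 h2 (by positivity) zero_le_one
  · refine le_trans (degree_mul_le _ _) ?_
    refine le_trans (add_le_add degree_C_le le_rfl) ?_
    simpa using hfd
  · rw [leadingCoeff_mul, leadingCoeff_C, hfc]

lemma inv_pow_mem_In (Ep : ∀ p : Nat.Primes, Set ℤ_[(p : ℕ)]) (n : ℕ) (np : Nat.Primes → ℕ)
    (hnp : ∀ p : Nat.Primes,
      Inp p (Ep p) n = {c : ℚ | ‖(c : ℚ_[(p : ℕ)]) * (p : ℚ_[(p : ℕ)]) ^ (np p)‖ ≤ 1})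
    (p : Nat.Primes) : ((p : ℚ) ^ (np p))⁻¹ ∈ In (Set.univ.pi Ep) n := by
  have hp0 : ((p : ℕ) : ℚ) ≠ 0 := Nat.cast_ne_zero.mpr p.2.pos.ne'
  have hp0' : ((p : ℕ) : ℚ_[(p : ℕ)]) ≠ 0 := Nat.cast_ne_zero.mpr p.2.pos.ne'
  have h1 : ((p : ℚ) ^ (np p))⁻¹ ∈ Inp p (Ep p) n := by
    rw [hnp p]
    show ‖((((p : ℚ) ^ (np p))⁻¹ : ℚ) : ℚ_[(p : ℕ)]) * ((p : ℕ) : ℚ_[(p : ℕ)]) ^ (np p)‖ ≤ 1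
    have : ((((p : ℚ) ^ (np p))⁻¹ : ℚ) : ℚ_[(p : ℕ)]) * ((p : ℕ) : ℚ_[(p : ℕ)]) ^ (np p) = 1 := by
      push_cast
      field_simp
    rw [this, norm_one]
  obtain ⟨f, hf, hfd, hfc⟩ := h1
  obtain ⟨M, hM0, hpM, hMmem⟩ := exists_nat_mul_mem Ep n p hf hfd hfc
  have hcop : IsCoprime (M : ℤ) (((p : ℕ) ^ (np p) : ℕ) : ℤ) := by
    rw [Int.isCoprime_iff_gcd_eq_one, Int.gcd_natCast_natCast]
    exact (Nat.Coprime.pow_right _ ((Nat.coprime_comm).mp ((p.2.coprime_iff_not_dvd).mpr hpM)))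
  obtain ⟨u, v, huv⟩ := hcop
  have huvQ : (u : ℚ) * M + v * ((p : ℕ) ^ (np p) : ℕ) = 1 := by exact_mod_cast huv
  have heq : ((p : ℚ) ^ (np p))⁻¹
      = (u : ℚ) * ((M : ℚ) * ((p : ℚ) ^ (np p))⁻¹) + (v : ℚ) * 1 := by
    have hppow : ((p : ℚ)) ^ (np p) ≠ 0 := pow_ne_zero _ hp0
    field_simp
    push_cast at huvQ ⊢
    linarith [huvQ]
  rw [heq]
  exact In_add (In_smul u hMmem) (In_smul v (one_mem_In _ _))

lemma den_factorization_le (Ep : ∀ p : Nat.Primes, Set ℤ_[(p : ℕ)])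
    (hinf : ∀ p, (Ep p).Infinite) (n : ℕ) (np : Nat.Primes → ℕ)
    (hnp : ∀ p : Nat.Primes,
      Inp p (Ep p) n = {c : ℚ | ‖(c : ℚ_[(p : ℕ)]) * (p : ℚ_[(p : ℕ)]) ^ (np p)‖ ≤ 1})
    {c : ℚ} (hc : c ∈ In (Set.univ.pi Ep) n) (p : Nat.Primes) :
    (c.den).factorization (p : ℕ) ≤ np p := by
  obtain ⟨f, hf, hfd, hfc⟩ := hc
  have h1 : c ∈ Inp p (Ep p) n := ⟨f, IntQ_subset_IntQp hinf hf p, hfd, hfc⟩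
  rw [hnp p] at h1
  rcases eq_or_ne c 0 with rfl | hc0
  · simp
  have hp1 : 1 < (p : ℕ) := p.2.one_lt
  have hp0 : ((p : ℕ) : ℚ) ≠ 0 := Nat.cast_ne_zero.mpr p.2.pos.ne'
  -- translate the norm bound to a padicNorm bound
  have h2 : padicNorm (p : ℕ) (c * ((p : ℕ) : ℚ) ^ (np p)) ≤ 1 := by
    have hcast : (c : ℚ_[(p : ℕ)]) * ((p : ℕ) : ℚ_[(p : ℕ)]) ^ (np p)
        = (((c * ((p : ℕ) : ℚ) ^ (np p)) : ℚ) : ℚ_[(p : ℕ)]) := by push_cast; ring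
    have h1' : ‖(c : ℚ_[(p : ℕ)]) * ((p : ℕ) : ℚ_[(p : ℕ)]) ^ (np p)‖ ≤ 1 := h1
    rw [hcast, Padic.eq_padicNorm] at h1'
    exact_mod_cast h1'
  have hx0 : c * ((p : ℕ) : ℚ) ^ (np p) ≠ 0 := mul_ne_zero hc0 (pow_ne_zero _ hp0)
  -- norm ≤ 1 gives valuation ≥ 0
  have h3 : 0 ≤ padicValRat (p : ℕ) (c * ((p : ℕ) : ℚ) ^ (np p)) := by
    by_contra hneg
    push_neg at hneg
    rw [padicNorm.eq_zpow_of_nonzero hx0] at h2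
    have : (1 : ℚ) < ((p : ℕ) : ℚ) ^ (-padicValRat (p : ℕ) (c * ((p : ℕ) : ℚ) ^ (np p))) := by
      apply one_lt_zpow₀ (by exact_mod_cast hp1)
      omega
    linarith
  have h4 : padicValRat (p : ℕ) (c * ((p : ℕ) : ℚ) ^ (np p))
      = padicValRat (p : ℕ) c + np p := by
    rw [padicValRat.mul hc0 (pow_ne_zero _ hp0), padicValRat.pow _]
    have : padicValRat (p : ℕ) ((p : ℕ) : ℚ) = 1 := padicValRat.self hp1
    rw [this, mul_one]
  rw [h4] at h3
  -- now analyze the valuation of c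
  by_cases hdvd : (p : ℕ) ∣ c.den
  · have hnum : ¬ ((p : ℕ) : ℤ) ∣ c.num := by
      intro hd
      have : (p : ℕ) ∣ c.num.natAbs := Int.natCast_dvd_natCast.mp (by
        rwa [Int.dvd_natAbs])
      exact (Nat.Prime.not_dvd_one p.2) (c.reduced ▸ Nat.dvd_gcd this hdvd)
    have hval : padicValRat (p : ℕ) c = - (padicValNat (p : ℕ) c.den : ℤ) := by
      rw [padicValRat_def, padicValInt.eq_zero_of_not_dvd hnum]
      simp
    rw [Nat.factorization_def _ p.2]
    omega
  · rw [Nat.factorization_eq_zero_of_not_dvd hdvd]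
    exact Nat.zero_le _

lemma one_mem_span (np : Nat.Primes → ℕ) :
    (1 : ℚ) ∈ Submodule.span ℤ (Set.range fun p : Nat.Primes => ((p : ℚ) ^ (np p))⁻¹) := by
  set P : Nat.Primes := ⟨2, Nat.prime_two⟩
  have hmem : ((P : ℚ) ^ (np P))⁻¹ ∈ Submodule.span ℤ
      (Set.range fun p : Nat.Primes => ((p : ℚ) ^ (np p))⁻¹) :=
    Submodule.subset_span ⟨P, rfl⟩
  have := Submodule.smul_mem _ ((2 : ℤ) ^ (np P)) hmem
  have heq : ((2 : ℤ) ^ (np P)) • (((P : ℚ)) ^ (np P))⁻¹ = 1 := by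
    rw [zsmul_eq_mul]
    push_cast
    show (2:ℚ) ^ np P * ((2:ℚ) ^ np P)⁻¹ = 1
    rw [mul_inv_cancel₀]
    positivity
  rwa [heq] at this

lemma inv_nat_mem_span (np : Nat.Primes → ℕ) :
    ∀ d : ℕ, d ≠ 0 → (∀ p : Nat.Primes, d.factorization (p : ℕ) ≤ np p) →
    ((d : ℚ))⁻¹ ∈ Submodule.span ℤ (Set.range fun p : Nat.Primes => ((p : ℚ) ^ (np p))⁻¹) := by
  intro d
  induction d using Nat.strong_induction_on with
  | _ d ih =>
    intro hd0 hdf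
    rcases eq_or_ne d 1 with rfl | hd1
    · simpa using one_mem_span np
    have hp : d.minFac.Prime := Nat.minFac_prime hd1
    set P : Nat.Primes := ⟨d.minFac, hp⟩ with hP
    set k : ℕ := d.factorization d.minFac with hk
    set m : ℕ := d / d.minFac ^ k with hm
    have hdm : d.minFac ^ k * m = d := Nat.ordProj_mul_ordCompl_eq_self d d.minFac
    have hm0 : m ≠ 0 := (Nat.ordCompl_pos d.minFac hd0).ne'
    have hpm : ¬ d.minFac ∣ m := Nat.not_dvd_ordCompl hp hd0
    have hk1 : 1 ≤ k := by
      rw [hk]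
      exact (Nat.Prime.factorization_pos_of_dvd hp hd0 d.minFac_dvd)
    have hmlt : m < d := by
      have h1 : 1 < d.minFac ^ k := Nat.one_lt_pow (by omega) hp.one_lt
      calc m < d.minFac ^ k * m := by
              nlinarith [Nat.pos_of_ne_zero hm0]
        _ = d := hdm
    have hmf : ∀ p : Nat.Primes, m.factorization (p : ℕ) ≤ np p := by
      intro p
      refine le_trans ?_ (hdf p)
      have hdvd : m ∣ d := ⟨d.minFac ^ k, by rw [mul_comm]; exact hdm.symm⟩
      exact (Nat.factorization_le_iff_dvd hm0 hd0).mpr hdvd (p : ℕ)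
    have hmmem := ih m hmlt hm0 hmf
    -- 1 / p^k in span
    have hpk : ((d.minFac : ℚ) ^ k)⁻¹ ∈ Submodule.span ℤ
        (Set.range fun p : Nat.Primes => ((p : ℚ) ^ (np p))⁻¹) := by
      have hkn : k ≤ np P := hdf P
      have hmem : ((P : ℚ) ^ (np P))⁻¹ ∈ Submodule.span ℤ
          (Set.range fun p : Nat.Primes => ((p : ℚ) ^ (np p))⁻¹) :=
        Submodule.subset_span ⟨P, rfl⟩
      have := Submodule.smul_mem _ ((d.minFac : ℤ) ^ (np P - k)) hmem
      have heq : ((d.minFac : ℤ) ^ (np P - k)) • (((P : ℚ)) ^ (np P))⁻¹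
          = ((d.minFac : ℚ) ^ k)⁻¹ := by
        rw [zsmul_eq_mul]
        have hq0 : (d.minFac : ℚ) ≠ 0 := Nat.cast_ne_zero.mpr hp.pos.ne'
        push_cast
        have hpow : (d.minFac : ℚ) ^ (np P - k) * (d.minFac : ℚ) ^ k
            = (d.minFac : ℚ) ^ (np P) := by
          rw [← pow_add]
          congr 1
          omega
        rw [show ((P : ℕ) : ℚ) = (d.minFac : ℚ) from rfl]
        field_simp
        linarith [hpow]
      rwa [heq] at this
    -- Bezout
    have hcop : IsCoprime ((d.minFac ^ k : ℕ) : ℤ) ((m : ℕ) : ℤ) := by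
      rw [Int.isCoprime_iff_gcd_eq_one, Int.gcd_natCast_natCast]
      exact Nat.Coprime.pow_left _ ((hp.coprime_iff_not_dvd).mpr hpm)
    obtain ⟨a, b, hab⟩ := hcop
    have habQ : (a : ℚ) * (d.minFac : ℚ) ^ k + (b : ℚ) * (m : ℚ) = 1 := by exact_mod_cast hab
    have heq : ((d : ℚ))⁻¹ = (a : ℚ) * ((m : ℚ))⁻¹ + (b : ℚ) * ((d.minFac : ℚ) ^ k)⁻¹ := by
      have hdQ : ((d.minFac : ℚ)) ^ k * (m : ℚ) = (d : ℚ) := by exact_mod_cast hdm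
      have hm0' : (m : ℚ) ≠ 0 := Nat.cast_ne_zero.mpr hm0
      have hq0 : (d.minFac : ℚ) ≠ 0 := Nat.cast_ne_zero.mpr hp.pos.ne'
      have hd0' : ((d : ℚ)) ≠ 0 := Nat.cast_ne_zero.mpr hd0
      rw [← hdQ]
      field_simp
      linear_combination (-1 : ℚ) * habQ
    rw [heq]
    exact Submodule.add_mem _
      (by simpa [zsmul_eq_mul] using Submodule.smul_mem _ a hmmem)
      (by simpa [zsmul_eq_mul] using Submodule.smul_mem _ b hpk)

lemma prod_factorization_le (np : Nat.Primes → ℕ) (h : {p : Nat.Primes | np p ≠ 0}.Finite)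
    (q : Nat.Primes) :
    (∏ p ∈ h.toFinset, (p : ℕ) ^ (np p)).factorization (q : ℕ) ≤ np q := by
  classical
  rw [Nat.factorization_prod (fun p _ => pow_ne_zero _ p.2.pos.ne')]
  rw [Finset.sum_apply']
  have hle : ∀ p ∈ h.toFinset, (((p : ℕ) ^ (np p)).factorization) (q : ℕ)
      ≤ (if p = q then np q else 0) := by
    intro p _
    rw [p.2.factorization_pow, Finsupp.single_apply]
    split_ifs with h1 h2 h2
    · exact le_of_eq (by rw [Subtype.ext h1])
    · exact absurd (Subtype.ext h1) h2
    · exact absurd (congrArg _ h2) h1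
    · exact le_rfl
  refine le_trans (Finset.sum_le_sum hle) ?_
  rw [Finset.sum_ite_eq' h.toFinset q (fun _ => np q)]
  split_ifs <;> omega

lemma span_eq_span_inv_prod (np : Nat.Primes → ℕ) (h : {p : Nat.Primes | np p ≠ 0}.Finite) :
    Submodule.span ℤ (Set.range fun p : Nat.Primes => ((p : ℚ) ^ (np p))⁻¹)
      = Submodule.span ℤ {(((∏ p ∈ h.toFinset, (p : ℕ) ^ (np p) : ℕ) : ℚ))⁻¹} := by
  classical
  set Dn : ℕ := ∏ p ∈ h.toFinset, (p : ℕ) ^ (np p) with hDn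
  have hDn0 : Dn ≠ 0 := Finset.prod_ne_zero_iff.mpr fun p _ => pow_ne_zero _ p.2.pos.ne'
  have hDnQ : ((Dn : ℚ)) ≠ 0 := Nat.cast_ne_zero.mpr hDn0
  apply le_antisymm
  · rw [Submodule.span_le]
    rintro _ ⟨p, rfl⟩
    show ((p : ℚ) ^ (np p))⁻¹ ∈ _
    rcases eq_or_ne (np p) 0 with hp0 | hp0
    · refine Submodule.mem_span_singleton.mpr ⟨(Dn : ℤ), ?_⟩
      rw [zsmul_eq_mul, hp0]
      push_cast
      rw [pow_zero, inv_one, mul_inv_cancel₀ hDnQ]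
    · have hmem : p ∈ h.toFinset := h.mem_toFinset.mpr hp0
      obtain ⟨t, ht⟩ := Finset.dvd_prod_of_mem (fun p : Nat.Primes => (p : ℕ) ^ (np p)) hmem
      have ht0 : t ≠ 0 := by
        intro h0
        exact hDn0 (by rw [hDn, ht, h0, mul_zero])
      refine Submodule.mem_span_singleton.mpr ⟨(t : ℤ), ?_⟩
      rw [zsmul_eq_mul]
      have hQ : (Dn : ℚ) = ((p : ℕ) : ℚ) ^ (np p) * (t : ℚ) := by exact_mod_cast ht
      have hp0' : (((p : ℕ) : ℚ)) ^ (np p) ≠ 0 :=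
        pow_ne_zero _ (Nat.cast_ne_zero.mpr p.2.pos.ne')
      have ht0' : (t : ℚ) ≠ 0 := Nat.cast_ne_zero.mpr ht0
      rw [hQ]
      push_cast
      field_simp
  · rw [Submodule.span_le, Set.singleton_subset_iff]
    exact inv_nat_mem_span np Dn hDn0 (prod_factorization_le np h)

lemma finite_of_fg (np : Nat.Primes → ℕ)
    (hFG : (Submodule.span ℤ (Set.range fun p : Nat.Primes => ((p : ℚ) ^ (np p))⁻¹)).FG) :
    {p : Nat.Primes | np p ≠ 0}.Finite := by
  classical
  obtain ⟨T, hT⟩ := hFG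
  set N : ℕ := ∏ c ∈ T, c.den with hNdef
  have hN0 : N ≠ 0 := Finset.prod_ne_zero_iff.mpr fun c _ => c.den_nz
  have hNQ0 : ((N : ℚ)) ≠ 0 := Nat.cast_ne_zero.mpr hN0
  have hTsub : Submodule.span ℤ (↑T : Set ℚ) ≤ Submodule.span ℤ {((N : ℚ))⁻¹} := by
    rw [Submodule.span_le]
    intro c hc
    obtain ⟨t, ht⟩ := Finset.dvd_prod_of_mem (fun c : ℚ => c.den) (Finset.mem_coe.mp hc)
    have ht0 : t ≠ 0 := by
      intro h0
      exact hN0 (by rw [hNdef, ht, h0, mul_zero])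
    refine Submodule.mem_span_singleton.mpr ⟨c.num * t, ?_⟩
    rw [zsmul_eq_mul]
    have hQ : (N : ℚ) = (c.den : ℚ) * (t : ℚ) := by exact_mod_cast ht
    have hden0 : ((c.den : ℚ)) ≠ 0 := Nat.cast_ne_zero.mpr c.den_nz
    have ht0' : ((t : ℚ)) ≠ 0 := Nat.cast_ne_zero.mpr ht0
    have hnum : ((c.den : ℚ)) * c = (c.num : ℚ) := by
      rw [mul_comm]; exact_mod_cast Rat.mul_den_eq_num c
    rw [hQ]
    push_cast
    field_simp
    linear_combination (-1 : ℚ) * hnum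
  have hdvd : ∀ p : Nat.Primes, np p ≠ 0 → (p : ℕ) ∣ N := by
    intro p hp0
    have h1 : ((p : ℚ) ^ (np p))⁻¹ ∈ Submodule.span ℤ {((N : ℚ))⁻¹} := by
      apply hTsub
      rw [hT]
      exact Submodule.subset_span ⟨p, rfl⟩
    obtain ⟨z, hz⟩ := Submodule.mem_span_singleton.mp h1
    rw [zsmul_eq_mul] at hz
    have hp0' : (((p : ℕ) : ℚ)) ^ (np p) ≠ 0 :=
      pow_ne_zero _ (Nat.cast_ne_zero.mpr p.2.pos.ne')
    have hzQ : (z : ℚ) * ((p : ℕ) : ℚ) ^ (np p) = (N : ℚ) := by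
      push_cast at hz
      field_simp at hz
      linarith [hz]
    have hzint : z * ((p : ℕ) : ℤ) ^ (np p) = (N : ℤ) := by exact_mod_cast hzQ
    have hdd : (((p : ℕ) : ℤ)) ∣ (N : ℤ) := by
      refine ⟨z * ((p : ℕ) : ℤ) ^ (np p - 1), ?_⟩
      rw [← hzint]
      have : (((p : ℕ) : ℤ)) ^ (np p) = ((p : ℕ) : ℤ) ^ (np p - 1) * ((p : ℕ) : ℤ) := by
        rw [← pow_succ]
        congr 1
        omega
      rw [this]
      ring
    exact_mod_cast hdd
  have hfin : {q : ℕ | q ∣ N}.Finite :=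
    Set.Finite.subset (Set.finite_Iic N)
      (fun q hq => Nat.le_of_dvd (Nat.pos_of_ne_zero hN0) hq)
  refine Set.Finite.subset (Set.Finite.preimage (Subtype.coe_injective.injOn) hfin) ?_
  intro p hp
  exact hdvd p hp


/-- Let `E = ∏_p E_p ⊆ Ẑ` be compact with each `E_p` infinite, and suppose
`I_n(E_p) = p^{-n_p} ℤ_(p)` for each `p`. Then `I_n(E) = Σ_p p^{-n_p} ℤ`; moreover `I_n(E)`
is a fractional ideal of `ℤ` iff `n_p = 0` for all but finitely many `p`, in which case
`I_n(E) = (∏_p p^{n_p})⁻¹ ℤ`. -/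
theorem In_pi_eq_span_of_local_data (Ep : ∀ p : Nat.Primes, Set ℤ_[(p : ℕ)])
    (hcpt : IsCompact (Set.univ.pi Ep)) (hinf : ∀ p, (Ep p).Infinite)
    (n : ℕ) (np : Nat.Primes → ℕ)
    (hnp : ∀ p : Nat.Primes,
      Inp p (Ep p) n = {c : ℚ | ‖(c : ℚ_[(p : ℕ)]) * (p : ℚ_[(p : ℕ)]) ^ (np p)‖ ≤ 1}) :
    In (Set.univ.pi Ep) n
        = (Submodule.span ℤ (Set.range fun p : Nat.Primes => ((p : ℚ) ^ (np p))⁻¹) : Set ℚ)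
      ∧ ((Submodule.span ℤ (In (Set.univ.pi Ep) n)).FG ↔ {p : Nat.Primes | np p ≠ 0}.Finite)
      ∧ ∀ h : {p : Nat.Primes | np p ≠ 0}.Finite,
          In (Set.univ.pi Ep) n
            = {c : ℚ | ∃ m : ℤ, c = m / ∏ p ∈ h.toFinset, (p : ℚ) ^ (np p)} := by
  classical
  set S : Set ℚ := Set.range fun p : Nat.Primes => ((p : ℚ) ^ (np p))⁻¹ with hS
  have hsub1 : In (Set.univ.pi Ep) n ⊆ (Submodule.span ℤ S : Set ℚ) := by
    intro c hc
    have hden := fun p => den_factorization_le Ep hinf n np hnp hc p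
    have h1 : ((c.den : ℚ))⁻¹ ∈ Submodule.span ℤ S :=
      inv_nat_mem_span np c.den c.den_nz hden
    have h2 := Submodule.smul_mem _ c.num h1
    have h3 : (c.num : ℚ) * ((c.den : ℚ))⁻¹ = c := by
      rw [← div_eq_mul_inv]
      exact_mod_cast Rat.num_div_den c
    rw [zsmul_eq_mul, h3] at h2
    exact h2
  have hsub2 : (Submodule.span ℤ S : Set ℚ) ⊆ In (Set.univ.pi Ep) n := by
    have hle : Submodule.span ℤ S ≤ InMod (Set.univ.pi Ep) n := by
      rw [Submodule.span_le]
      rintro _ ⟨p, rfl⟩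
      exact inv_pow_mem_In Ep n np hnp p
    exact hle
  have hmain : In (Set.univ.pi Ep) n = (Submodule.span ℤ S : Set ℚ) :=
    Set.Subset.antisymm hsub1 hsub2
  have hspan2 : Submodule.span ℤ (In (Set.univ.pi Ep) n) = Submodule.span ℤ S := by
    rw [hmain]
    exact Submodule.span_eq _
  refine ⟨hmain, ⟨?_, ?_⟩, ?_⟩
  · intro hFG
    rw [hspan2] at hFG
    exact finite_of_fg np hFG
  · intro h
    rw [hspan2, span_eq_span_inv_prod np h]
    exact Submodule.fg_span_singleton _
  · intro h
    set Dn : ℕ := ∏ p ∈ h.toFinset, (p : ℕ) ^ (np p) with hDn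
    have hDn0 : Dn ≠ 0 := Finset.prod_ne_zero_iff.mpr fun p _ => pow_ne_zero _ p.2.pos.ne'
    have hDcast : (∏ p ∈ h.toFinset, (p : ℚ) ^ (np p)) = ((Dn : ℚ)) := by
      rw [hDn]
      push_cast
      rfl
    have hspanD := span_eq_span_inv_prod np h
    ext c
    rw [hmain]
    constructor
    · intro hc
      have hc' : c ∈ Submodule.span ℤ {((Dn : ℚ))⁻¹} := by
        rw [← hspanD]
        exact hc
      obtain ⟨z, hz⟩ := Submodule.mem_span_singleton.mp hc'
      refine ⟨z, ?_⟩
      rw [hDcast, ← hz, zsmul_eq_mul, div_eq_mul_inv]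
    · rintro ⟨m, rfl⟩
      show (m : ℚ) / _ ∈ (Submodule.span ℤ S : Set ℚ)
      rw [hDcast, div_eq_mul_inv, ← zsmul_eq_mul]
      exact Submodule.smul_mem _ m
        (inv_nat_mem_span np Dn hDn0 (prod_factorization_le np h))
end

section
/- Let E = ∏_p E_p ⊆ Ẑ be compact and n ≥ 0. The n-th characteristic module I_n(E) of Int_ℚ(E, Ẑ) is a fractional ideal of ℤ (equivalently, a finitely generated ℤ-submodule of ℚ) if and only if (1) #E_p > n for all primes p, and (2) #(E_p mod p) > n for all but finitely many primes p. -/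
open Polynomial

/-! ### Auxiliary lemmas -/

section Aux

open Matrix

variable {p : ℕ} [Fact p.Prime]

/-- Key Cramer-rule estimate: if `f` takes `ℤ_p`-values at `deg f + 1` points of `ℤ_p`,
then the Vandermonde determinant of the points times the leading coefficient is a
`p`-adic integer. -/
lemma norm_det_mul_leadingCoeff_le (f : ℚ[X]) {m : ℕ} (hm : f.natDegree = m)
    (α : Fin (m + 1) → ℤ_[p]) (hval : ∀ i, ‖(aeval ((α i : ℚ_[p]))) f‖ ≤ 1) :
    ‖((∏ i : Fin (m+1), ∏ j ∈ Finset.Ioi i, (α j - α i) : ℤ_[p]) : ℚ_[p])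
        * ((f.leadingCoeff : ℚ) : ℚ_[p])‖ ≤ 1 := by
  classical
  set K := ℚ_[p]
  set φ : ℤ_[p] →+* ℚ_[p] := PadicInt.Coe.ringHom with hφ
  set V : Matrix (Fin (m+1)) (Fin (m+1)) ℤ_[p] := Matrix.vandermonde α with hV
  set b : Fin (m+1) → ℤ_[p] := fun i => ⟨(aeval ((α i : ℚ_[p]))) f, hval i⟩ with hb
  set F : K[X] := f.map (algebraMap ℚ K) with hF
  set a : Fin (m+1) → K := fun j => F.coeff j with ha
  have hmul : (V.map φ) *ᵥ a = fun i => ((b i : K)) := by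
    funext i
    show ∑ j : Fin (m+1), φ (α i ^ (j : ℕ)) * F.coeff j = _
    have hdeg : F.natDegree < m + 1 := Nat.lt_succ_of_le (hm ▸ natDegree_map_le)
    have : (aeval ((α i : ℚ_[p]))) f = F.eval ((α i : ℚ_[p])) := by
      rw [aeval_def, eval_map]
    rw [hb]
    simp only [this]
    rw [eval_eq_sum_range' hdeg]
    rw [← Fin.sum_univ_eq_sum_range (fun j => F.coeff j * ((α i : K)) ^ j) (m+1)]
    refine Finset.sum_congr rfl fun j _ => ?_
    rw [mul_comm]
    push_cast [hφ]
    rfl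
  have h2 : Matrix.cramer (V.map φ) ((V.map φ) *ᵥ a) = (V.map φ).det • a := by
    rw [Matrix.cramer_eq_adjugate_mulVec, Matrix.mulVec_mulVec, Matrix.adjugate_mul,
      Matrix.smul_mulVec, Matrix.one_mulVec]
  have h3 : Matrix.cramer (V.map φ) (fun i => ((b i : K))) = fun i => ((Matrix.cramer V b i : K)) := by
    funext i
    rw [Matrix.cramer_apply, Matrix.cramer_apply]
    have h := RingHom.map_det φ (V.updateCol i b)
    rw [RingHom.mapMatrix_apply, Matrix.map_updateCol] at h
    exact h.symm
  have h4 : (V.map φ).det • a = fun i => ((Matrix.cramer V b i : K)) := by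
    rw [← h3, ← hmul, h2]
  have h5 := congrFun h4 (Fin.last m)
  have hdet : (V.map φ).det = ((∏ i : Fin (m+1), ∏ j ∈ Finset.Ioi i, (α j - α i) : ℤ_[p]) : ℚ_[p]) := by
    have h := RingHom.map_det φ V
    rw [RingHom.mapMatrix_apply] at h
    rw [← h, hV, Matrix.det_vandermonde]
    rfl
  have hcoeff : a (Fin.last m) = ((f.leadingCoeff : ℚ) : ℚ_[p]) := by
    rw [ha]
    show F.coeff m = _
    rw [hF, coeff_map, leadingCoeff, hm]
    exact eq_ratCast (algebraMap ℚ K) _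
  rw [Pi.smul_apply, hcoeff, hdet, smul_eq_mul] at h5
  rw [h5]
  rw [← PadicInt.norm_def]
  exact PadicInt.norm_le_one _

lemma toZMod_eq_zero_iff_dvd (z : ℤ_[p]) : PadicInt.toZMod z = 0 ↔ (p : ℤ_[p]) ∣ z := by
  rw [← RingHom.mem_ker, PadicInt.ker_toZMod, PadicInt.maximalIdeal_eq_span_p,
    Ideal.mem_span_singleton]

lemma norm_one_of_toZMod_ne (z : ℤ_[p]) (hz : PadicInt.toZMod z ≠ 0) : ‖z‖ = 1 := by
  refine le_antisymm (PadicInt.norm_le_one z) ?_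
  by_contra h
  exact hz ((toZMod_eq_zero_iff_dvd z).mpr ((PadicInt.norm_lt_one_iff_dvd z).mp (lt_of_not_ge h)))

/-- Good-prime bound: points in `n+1` distinct residue classes force integral
leading coefficients. -/
lemma norm_lc_le_one (n : ℕ) (S : Set ℤ_[p])
    (x : Fin (n+1) → ℤ_[p]) (hx : ∀ i, x i ∈ S)
    (hinj : Function.Injective (fun i => PadicInt.toZMod (x i)))
    (f : ℚ[X]) (hf : ∀ y ∈ S, ‖(aeval ((y:ℚ_[p]))) f‖ ≤ 1) (hdeg : f.degree ≤ (n:ℕ)) :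
    ‖((f.leadingCoeff : ℚ) : ℚ_[p])‖ ≤ 1 := by
  classical
  rcases eq_or_ne f 0 with rfl | hf0
  · simp
  have hnd : f.natDegree ≤ n := natDegree_le_iff_degree_le.mpr hdeg
  set m := f.natDegree with hm
  set x' : ℕ → ℤ_[p] := fun i => if h : i < n+1 then x ⟨i, h⟩ else 0 with hx'
  have hx'lt : ∀ (i : ℕ) (h : i < n + 1), x' i = x ⟨i, h⟩ := fun i h => dif_pos h
  set α : Fin (m+1) → ℤ_[p] := fun i => x' i with hα
  have hval : ∀ i, ‖(aeval ((α i : ℚ_[p]))) f‖ ≤ 1 := by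
    intro i
    have hi : (i : ℕ) < n + 1 := lt_of_lt_of_le i.2 (by omega)
    rw [hα]
    simp only [hx'lt _ hi]
    exact hf _ (hx _)
  have key := norm_det_mul_leadingCoeff_le (p := p) f hm.symm α hval
  have hD : ‖((∏ i : Fin (m+1), ∏ j ∈ Finset.Ioi i, (α j - α i) : ℤ_[p]) : ℚ_[p])‖ = 1 := by
    have hcast : ((∏ i : Fin (m+1), ∏ j ∈ Finset.Ioi i, (α j - α i) : ℤ_[p]) : ℚ_[p])
        = ∏ i : Fin (m+1), ∏ j ∈ Finset.Ioi i, ((α j - α i : ℤ_[p]) : ℚ_[p]) := by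
      have h1 := map_prod (PadicInt.Coe.ringHom (p := p))
        (fun i : Fin (m+1) => ∏ j ∈ Finset.Ioi i, (α j - α i)) Finset.univ
      rw [show ((((∏ i : Fin (m+1), ∏ j ∈ Finset.Ioi i, (α j - α i) : ℤ_[p])) : ℚ_[p]))
          = PadicInt.Coe.ringHom (∏ i : Fin (m+1), ∏ j ∈ Finset.Ioi i, (α j - α i)) from rfl, h1]
      exact Finset.prod_congr rfl fun i _ => map_prod _ _ _
    have : ∀ i : Fin (m+1), ∀ j ∈ Finset.Ioi i, ‖α j - α i‖ = 1 := by
      intro i j hj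
      have hij : (i:ℕ) < (j:ℕ) := Fin.lt_iff_val_lt_val.mp (Finset.mem_Ioi.mp hj)
      have hi : (i : ℕ) < n + 1 := lt_of_lt_of_le i.2 (by omega)
      have hjn : (j : ℕ) < n + 1 := lt_of_lt_of_le j.2 (by omega)
      refine norm_one_of_toZMod_ne _ ?_
      rw [hα]
      simp only [hx'lt _ hi, hx'lt _ hjn, map_sub, sub_ne_zero]
      intro hcon
      have := hinj hcon
      simp only [Fin.mk.injEq] at this
      omega
    rw [hcast, norm_prod]
    refine Finset.prod_eq_one fun i _ => ?_
    rw [norm_prod]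
    refine Finset.prod_eq_one fun j hj => ?_
    rw [← PadicInt.norm_def]
    exact this i j hj
  rw [norm_mul, hD, one_mul] at key
  exact key

/-- Any prime with `n+1` points gives a power bound on leading coefficients. -/
lemma exists_pow_bound (n : ℕ) (S : Set ℤ_[p])
    (x : Fin (n+1) → ℤ_[p]) (hx : ∀ i, x i ∈ S) (hinj : Function.Injective x) :
    ∃ k : ℕ, ∀ f : ℚ[X], (∀ y ∈ S, ‖(aeval ((y:ℚ_[p]))) f‖ ≤ 1) → f.degree ≤ (n:ℕ) →
      ‖((f.leadingCoeff : ℚ) : ℚ_[p])‖ ≤ (p:ℝ)^k := by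
  classical
  set x' : ℕ → ℤ_[p] := fun i => if h : i < n+1 then x ⟨i, h⟩ else 0 with hx'
  have hx'lt : ∀ (i : ℕ) (h : i < n + 1), x' i = x ⟨i, h⟩ := fun i h => dif_pos h
  set D : ℕ → ℤ_[p] := fun m => ∏ i : Fin (m+1), ∏ j ∈ Finset.Ioi i, (x' (j:ℕ) - x' (i:ℕ)) with hD
  have hDne : ∀ m, m ≤ n → (D m : ℚ_[p]) ≠ 0 := by
    intro m hmn
    rw [PadicInt.coe_ne_zero, hD]
    rw [Finset.prod_ne_zero_iff]
    intro i _
    rw [Finset.prod_ne_zero_iff]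
    intro j hj
    have hij : (i:ℕ) < (j:ℕ) := Fin.lt_iff_val_lt_val.mp (Finset.mem_Ioi.mp hj)
    have hi : (i : ℕ) < n + 1 := by omega
    have hjn : (j : ℕ) < n + 1 := by omega
    rw [hx'lt _ hi, hx'lt _ hjn]
    refine sub_ne_zero_of_ne fun hcon => ?_
    have := hinj hcon
    simp only [Fin.mk.injEq] at this
    omega
  have hp1 : (1:ℝ) < p := by exact_mod_cast (Fact.out : p.Prime).one_lt
  obtain ⟨k, hk⟩ := pow_unbounded_of_one_lt
    ((Finset.range (n+1)).sup' (Finset.nonempty_range_add_one) (fun m => ‖(D m : ℚ_[p])‖⁻¹)) hp1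
  refine ⟨k, fun f hf hdeg => ?_⟩
  rcases eq_or_ne f 0 with rfl | hf0
  · simp only [leadingCoeff_zero, Rat.cast_zero, norm_zero]
    positivity
  have hnd : f.natDegree ≤ n := natDegree_le_iff_degree_le.mpr hdeg
  set m := f.natDegree with hm
  set α : Fin (m+1) → ℤ_[p] := fun i => x' i with hα
  have hval : ∀ i, ‖(aeval ((α i : ℚ_[p]))) f‖ ≤ 1 := by
    intro i
    have hi : (i : ℕ) < n + 1 := by omega
    rw [hα]
    simp only [hx'lt _ hi]
    exact hf _ (hx _)
  have key := norm_det_mul_leadingCoeff_le (p := p) f hm.symm α hval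
  have hDm : (∏ i : Fin (m+1), ∏ j ∈ Finset.Ioi i, (α j - α i) : ℤ_[p]) = D m := rfl
  rw [hDm, norm_mul] at key
  have hpos : 0 < ‖(D m : ℚ_[p])‖ := norm_pos_iff.mpr (hDne m hnd)
  have h6 : ‖((f.leadingCoeff : ℚ) : ℚ_[p])‖ ≤ ‖(D m : ℚ_[p])‖⁻¹ := by
    rw [inv_eq_one_div, le_div_iff₀ hpos, mul_comm]
    exact key
  refine h6.trans (le_trans ?_ hk.le)
  exact Finset.le_sup' (f := fun m => ‖(D m : ℚ_[p])‖⁻¹) (Finset.mem_range.mpr (by omega : m < n+1))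

end Aux

lemma exists_inj_fun {β : Type*} (T : Set β) (n : ℕ)
    (h : ∃ t, t ⊆ T ∧ t.Finite ∧ t.ncard = n+1) :
    ∃ g : Fin (n+1) → β, Function.Injective g ∧ ∀ i, g i ∈ T := by
  obtain ⟨t, htT, htfin, htcard⟩ := h
  have hcard : htfin.toFinset.card = n + 1 := by
    rw [← Set.ncard_eq_toFinset_card _ htfin]
    exact htcard
  let e := htfin.toFinset.equivFinOfCardEq hcard
  refine ⟨fun i => (e.symm i : β), ?_, ?_⟩
  · intro i j hij
    have := Subtype.coe_injective hij
    exact e.symm.injective this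
  · intro i
    exact htT (htfin.mem_toFinset.mp (e.symm i).2)

lemma exists_inj_fun_of_ncard {β : Type*} (T : Set β) (n : ℕ) (h : n < T.ncard ∨ T.Infinite) :
    ∃ g : Fin (n+1) → β, Function.Injective g ∧ ∀ i, g i ∈ T := by
  apply exists_inj_fun
  rcases h with h | h
  · obtain ⟨t, h1, h2⟩ := Set.exists_subset_card_eq (Nat.succ_le_of_lt h)
    refine ⟨t, h1, ?_, h2⟩
    have : T.Finite := by
      by_contra hc
      rw [Set.Infinite.ncard hc] at h
      omega
    exact this.subset h1
  · exact h.exists_subset_ncard_eq (n+1)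

lemma fg_iff_exists (M : Submodule ℤ ℚ) :
    M.FG ↔ ∃ d : ℕ, 0 < d ∧ M ≤ Submodule.span ℤ {((d : ℚ))⁻¹} := by
  constructor
  · rintro ⟨S, hS⟩
    refine ⟨∏ x ∈ S, x.den, Finset.prod_pos (fun x _ => x.pos), ?_⟩
    rw [← hS, Submodule.span_le]
    intro x hx
    rw [SetLike.mem_coe, Submodule.mem_span_singleton]
    obtain ⟨c, hc⟩ : x.den ∣ ∏ y ∈ S, y.den := Finset.dvd_prod_of_mem _ hx
    have hc0 : c ≠ 0 := by
      intro h0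
      rw [h0, mul_zero] at hc
      have := Finset.prod_pos (fun y (_ : y ∈ S) => y.pos)
      omega
    refine ⟨x.num * c, ?_⟩
    rw [hc]
    have hden : (x.den : ℚ) ≠ 0 := Nat.cast_ne_zero.mpr x.den_nz
    have hcq : (c : ℚ) ≠ 0 := Nat.cast_ne_zero.mpr hc0
    rw [zsmul_eq_mul]
    have hx' : (x.num : ℚ) = x * (x.den : ℚ) := by
      have h0 := Rat.num_div_den x
      rw [div_eq_iff hden] at h0
      exact h0
    push_cast
    field_simp
    rw [hx']
    ring
  · rintro ⟨d, hd, hle⟩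
    set N := Submodule.span ℤ ({((d : ℚ))⁻¹} : Set ℚ) with hN
    have : IsNoetherian ℤ N :=
      isNoetherian_of_fg_of_noetherian _ (Submodule.fg_span_singleton _)
    have hfg : (Submodule.comap N.subtype M).FG := IsNoetherian.noetherian _
    have hmap := hfg.map N.subtype
    rwa [Submodule.map_comap_subtype, inf_eq_right.mpr hle] at hmap

lemma exists_int_of_padicNorm_le (r : ℚ) (h : ∀ q : Nat.Primes, padicNorm q r ≤ 1) :
    ∃ m : ℤ, r = m := by
  suffices hden : r.den = 1 by
    refine ⟨r.num, ?_⟩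
    rw [← Rat.num_div_den r, hden]
    simp
  by_contra hden
  set q := r.den.minFac with hq
  have hqp : q.Prime := Nat.minFac_prime hden
  haveI : Fact q.Prime := ⟨hqp⟩
  have hr0 : r ≠ 0 := by
    intro h0
    rw [h0] at hden
    exact hden rfl
  have hnum : ¬ (q : ℤ) ∣ r.num := by
    intro hdvd
    have h1 : q ∣ r.num.natAbs := Int.natCast_dvd.mp hdvd
    have h2 : q ∣ r.den := Nat.minFac_dvd _
    have h3 : q ∣ 1 := r.reduced ▸ Nat.dvd_gcd h1 h2
    exact hqp.one_lt.ne' (Nat.dvd_one.mp h3)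
  have hval : padicValRat q r = - (padicValNat q r.den : ℤ) := by
    rw [padicValRat, padicValInt.eq_zero_of_not_dvd hnum]
    simp
  have hvden : 1 ≤ padicValNat q r.den :=
    one_le_padicValNat_of_dvd r.den_nz (Nat.minFac_dvd _)
  have := h ⟨q, hqp⟩
  rw [padicNorm.eq_zpow_of_nonzero hr0, hval] at this
  simp only [neg_neg] at this
  have hq1 : (1 : ℚ) < q := by exact_mod_cast hqp.one_lt
  have : (1:ℚ) < (q:ℚ) ^ (padicValNat q r.den : ℤ) := by
    apply one_lt_zpow₀ hq1
    exact_mod_cast hvden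
  linarith [h ⟨q, hqp⟩, this]

lemma mem_IntQp_of_mem_IntQ (Ep : ∀ p : Nat.Primes, Set ℤ_[(p:ℕ)]) (hne : ∀ q, (Ep q).Nonempty)
    {f : ℚ[X]} (hf : f ∈ IntQ (Set.univ.pi Ep)) (p : Nat.Primes) :
    ∀ x ∈ Ep p, ‖(aeval ((x : ℚ_[(p:ℕ)]))) f‖ ≤ 1 := by
  classical
  intro x hx
  set α : Zhat := Function.update (fun q => (hne q).some) p x with hα
  have hmem : α ∈ Set.univ.pi Ep := by
    intro q _
    by_cases hq : q = p
    · subst hq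
      rw [hα, Function.update_self]
      exact hx
    · rw [hα, Function.update_of_ne hq]
      exact (hne q).some_mem
  have := hf α hmem p
  rwa [hα, Function.update_self] at this

lemma rat_norm_eq (q : Nat.Primes) (c : ℚ) :
    ‖((c : ℚ) : ℚ_[(q:ℕ)])‖ = ((padicNorm q c : ℚ) : ℝ) := Padic.eq_padicNorm c

lemma norm_natCast_le_one (q : Nat.Primes) (m : ℕ) : ‖((m : ℕ) : ℚ_[(q:ℕ)])‖ ≤ 1 := by
  have := Padic.norm_int_le_one (p := (q:ℕ)) (m : ℤ)
  push_cast at this ⊢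
  exact this

lemma norm_p_pow (q : Nat.Primes) (k : ℕ) :
    ‖(((q:ℕ) : ℚ_[(q:ℕ)]))^k‖ = ((q:ℕ):ℝ)^(-(k:ℤ)) := by
  rw [norm_pow, Padic.norm_p, inv_pow, ← zpow_natCast, ← zpow_neg]

/-- Main construction: a polynomial with leading coefficient `p^{-N}` which is
integer-valued on `E`, given a covering of `E_p` by `p^{-N}`-balls around at most `n`
integers. -/
lemma construction (Ep : ∀ p : Nat.Primes, Set ℤ_[(p:ℕ)]) (n : ℕ) (p : Nat.Primes)
    (t : Finset ℕ) (ht : t.card ≤ n) (N : ℕ)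
    (hcover : ∀ x ∈ Ep p, ∃ a ∈ t, ‖x - ((a:ℕ) : ℤ_[(p:ℕ)])‖ ≤ ((p:ℕ):ℝ)^(-(N:ℤ))) :
    (((p:ℕ):ℚ)^N)⁻¹ ∈ In (Set.univ.pi Ep) n := by
  classical
  set u : ℚ := (((p:ℕ):ℚ)^N)⁻¹ with hu
  have hppos : (0:ℚ) < ((p:ℕ):ℚ) := by exact_mod_cast p.2.pos
  have hu0 : u ≠ 0 := by
    rw [hu]
    exact inv_ne_zero (pow_ne_zero _ hppos.ne')
  set g : ℚ[X] := (∏ a ∈ t, (X - C ((a:ℕ):ℚ))) * X^(n - t.card) with hg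
  have hgmonic : g.Monic := by
    refine Monic.mul ?_ (monic_X_pow _)
    exact monic_prod_of_monic _ _ fun a _ => monic_X_sub_C _
  have hgdeg : g.natDegree = n := by
    rw [hg, Monic.natDegree_mul (monic_prod_of_monic _ _ fun a _ => monic_X_sub_C _)
      (monic_X_pow _), natDegree_X_pow, natDegree_prod_of_monic _ _ fun a _ => monic_X_sub_C _]
    simp only [natDegree_X_sub_C]
    rw [Finset.sum_const, smul_eq_mul, mul_one]
    omega
  set f : ℚ[X] := C u * g with hf
  have hfl : f.leadingCoeff = u := by
    rw [hf, leadingCoeff_mul, leadingCoeff_C, hgmonic.leadingCoeff, mul_one]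
  have hfdeg : f.degree ≤ (n : ℕ) := by
    rw [hf, degree_C_mul hu0]
    rw [degree_eq_natDegree hgmonic.ne_zero, hgdeg]
  refine ⟨f, ?_, hfdeg, hfl⟩
  intro α hα q
  have heval : (aeval ((α q : ℚ_[(q:ℕ)]))) f
      = ((u:ℚ) : ℚ_[(q:ℕ)]) * ((∏ a ∈ t, ((α q : ℚ_[(q:ℕ)]) - ((a:ℕ) : ℚ_[(q:ℕ)])))
          * (α q : ℚ_[(q:ℕ)])^(n - t.card)) := by
    rw [hf, hg]
    simp only [map_mul, map_prod, map_sub, map_pow, aeval_X, aeval_C, map_natCast]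
    rw [eq_ratCast (algebraMap ℚ ℚ_[(q:ℕ)]) u]
  have hucast : ‖((u:ℚ) : ℚ_[(q:ℕ)])‖ = ‖(((p:ℕ) : ℚ_[(q:ℕ)]))^N‖⁻¹ := by
    rw [hu]
    push_cast
    rw [norm_inv]
  have hfac_le_one : ∀ a : ℕ, ‖(α q : ℚ_[(q:ℕ)]) - ((a:ℕ) : ℚ_[(q:ℕ)])‖ ≤ 1 := by
    intro a
    have : (α q : ℚ_[(q:ℕ)]) - ((a:ℕ) : ℚ_[(q:ℕ)]) = ((α q - ((a:ℕ) : ℤ_[(q:ℕ)]) : ℤ_[(q:ℕ)]) : ℚ_[(q:ℕ)]) := by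
      push_cast
      rfl
    rw [this, ← PadicInt.norm_def]
    exact PadicInt.norm_le_one _
  have hpow_le_one : ‖(α q : ℚ_[(q:ℕ)])^(n - t.card)‖ ≤ 1 := by
    rw [norm_pow]
    exact pow_le_one₀ (norm_nonneg _) (by rw [← PadicInt.norm_def]; exact PadicInt.norm_le_one _)
  rw [heval, norm_mul, norm_mul, hucast]
  by_cases hq : q = p
  · subst hq
    obtain ⟨a₀, ha₀, hcov⟩ := hcover (α q) (hα q (Set.mem_univ q))
    have hprod : ‖∏ a ∈ t, ((α q : ℚ_[(q:ℕ)]) - ((a:ℕ) : ℚ_[(q:ℕ)]))‖ ≤ ((q:ℕ):ℝ)^(-(N:ℤ)) := by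
      rw [← Finset.mul_prod_erase _ _ ha₀, norm_mul]
      have h1 : ‖(α q : ℚ_[(q:ℕ)]) - ((a₀:ℕ) : ℚ_[(q:ℕ)])‖ ≤ ((q:ℕ):ℝ)^(-(N:ℤ)) := by
        have heq : (α q : ℚ_[(q:ℕ)]) - ((a₀:ℕ) : ℚ_[(q:ℕ)])
            = ((α q - ((a₀:ℕ) : ℤ_[(q:ℕ)]) : ℤ_[(q:ℕ)]) : ℚ_[(q:ℕ)]) := by
          push_cast
          rfl
        rw [heq, ← PadicInt.norm_def]
        exact hcov
      have h2 : ‖∏ a ∈ t.erase a₀, ((α q : ℚ_[(q:ℕ)]) - ((a:ℕ) : ℚ_[(q:ℕ)]))‖ ≤ 1 := by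
        rw [norm_prod]
        exact Finset.prod_le_one (fun a _ => norm_nonneg _) (fun a _ => hfac_le_one a)
      calc ‖(α q : ℚ_[(q:ℕ)]) - ((a₀:ℕ) : ℚ_[(q:ℕ)])‖ * ‖∏ a ∈ t.erase a₀, ((α q : ℚ_[(q:ℕ)]) - ((a:ℕ) : ℚ_[(q:ℕ)]))‖
          ≤ ((q:ℕ):ℝ)^(-(N:ℤ)) * 1 := by
            refine mul_le_mul h1 h2 (norm_nonneg _) ?_
            positivity
        _ = ((q:ℕ):ℝ)^(-(N:ℤ)) := mul_one _
    rw [norm_p_pow q N]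
    have hZ : (0:ℝ) < ((q:ℕ):ℝ)^(-(N:ℤ)) := by
      have : (0:ℝ) < ((q:ℕ):ℝ) := by exact_mod_cast q.2.pos
      positivity
    calc (((q:ℕ):ℝ)^(-(N:ℤ)))⁻¹ * (‖∏ a ∈ t, ((α q : ℚ_[(q:ℕ)]) - ((a:ℕ) : ℚ_[(q:ℕ)]))‖ * ‖(α q : ℚ_[(q:ℕ)])^(n - t.card)‖)
        ≤ (((q:ℕ):ℝ)^(-(N:ℤ)))⁻¹ * (((q:ℕ):ℝ)^(-(N:ℤ)) * 1) := by
          refine mul_le_mul_of_nonneg_left ?_ (by positivity)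
          refine mul_le_mul hprod hpow_le_one (norm_nonneg _) hZ.le
      _ = 1 := by field_simp
  · have hqp : ¬ ((q:ℕ) ∣ (p:ℕ)) := by
      intro hdvd
      exact hq (Subtype.coe_injective ((Nat.prime_dvd_prime_iff_eq q.2 p.2).mp hdvd).symm ▸ rfl)
    have hnorm_p : ‖((p:ℕ) : ℚ_[(q:ℕ)])‖ = 1 := by
      rw [show (((p:ℕ):ℚ_[(q:ℕ)])) = ((((p:ℕ):ℚ)):ℚ_[(q:ℕ)]) by push_cast; rfl,
        rat_norm_eq q ((p:ℕ):ℚ)]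
      rw [show ((p:ℕ):ℚ) = (((p:ℕ):ℕ):ℚ) from rfl]
      rw [(padicNorm.nat_eq_one_iff (p:ℕ)).mpr hqp]
      norm_num
    have : ‖(((p:ℕ) : ℚ_[(q:ℕ)]))^N‖ = 1 := by rw [norm_pow, hnorm_p, one_pow]
    rw [this, inv_one, one_mul]
    have hprod : ‖∏ a ∈ t, ((α q : ℚ_[(q:ℕ)]) - ((a:ℕ) : ℚ_[(q:ℕ)]))‖ ≤ 1 := by
      rw [norm_prod]
      exact Finset.prod_le_one (fun a _ => norm_nonneg _) (fun a _ => hfac_le_one a)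
    calc ‖∏ a ∈ t, ((α q : ℚ_[(q:ℕ)]) - ((a:ℕ) : ℚ_[(q:ℕ)]))‖ * ‖(α q : ℚ_[(q:ℕ)])^(n - t.card)‖
        ≤ 1 * 1 := mul_le_mul hprod hpow_le_one (norm_nonneg _) one_pos.le
      _ = 1 := mul_one 1

lemma inv_pow_mem (Ep : ∀ p : Nat.Primes, Set ℤ_[(p:ℕ)]) (n : ℕ) (p : Nat.Primes)
    (hfin : (Ep p).Finite) (hcard : (Ep p).ncard ≤ n) (N : ℕ) :
    (((p:ℕ):ℚ)^N)⁻¹ ∈ In (Set.univ.pi Ep) n := by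
  classical
  refine construction Ep n p (hfin.toFinset.image (fun a => a.appr N)) ?_ N ?_
  · calc (hfin.toFinset.image fun a => a.appr N).card
        ≤ hfin.toFinset.card := Finset.card_image_le
      _ = (Ep p).ncard := (Set.ncard_eq_toFinset_card _ hfin).symm
      _ ≤ n := hcard
  · intro x hx
    refine ⟨x.appr N, Finset.mem_image_of_mem _ (hfin.mem_toFinset.mpr hx), ?_⟩
    rw [PadicInt.norm_le_pow_iff_mem_span_pow]
    exact PadicInt.appr_spec N x

lemma inv_mem (Ep : ∀ p : Nat.Primes, Set ℤ_[(p:ℕ)]) (n : ℕ) (p : Nat.Primes)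
    (hcard : (PadicInt.toZMod '' (Ep p)).ncard ≤ n) :
    (((p:ℕ):ℚ))⁻¹ ∈ In (Set.univ.pi Ep) n := by
  classical
  haveI : NeZero ((p:ℕ)) := ⟨p.2.ne_zero⟩
  have hfin : (PadicInt.toZMod '' (Ep p)).Finite := Set.toFinite _
  have h := construction Ep n p (hfin.toFinset.image (fun z => z.val)) ?_ 1 ?_
  · rwa [pow_one] at h
  · calc (hfin.toFinset.image fun z => z.val).card
        ≤ hfin.toFinset.card := Finset.card_image_le
      _ = (PadicInt.toZMod '' (Ep p)).ncard := (Set.ncard_eq_toFinset_card _ hfin).symm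
      _ ≤ n := hcard
  · intro x hx
    refine ⟨(PadicInt.toZMod x).val, Finset.mem_image_of_mem _
      (hfin.mem_toFinset.mpr ⟨x, hx, rfl⟩), ?_⟩
    have hz : PadicInt.toZMod (x - (((PadicInt.toZMod x).val : ℕ) : ℤ_[(p:ℕ)])) = 0 := by
      rw [map_sub, map_natCast, ZMod.natCast_rightInverse _, sub_self]
    rw [show ((1:ℕ):ℤ) = (1:ℤ) from rfl]
    have hmem : x - (((PadicInt.toZMod x).val : ℕ) : ℤ_[(p:ℕ)])
        ∈ Ideal.span {((p:ℕ) : ℤ_[(p:ℕ)])^(1:ℕ)} := by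
      rw [pow_one, Ideal.mem_span_singleton]
      exact (toZMod_eq_zero_iff_dvd _).mp hz
    have := (PadicInt.norm_le_pow_iff_mem_span_pow _ 1).mpr hmem
    exact_mod_cast this

/-- For compact `E = ∏_p E_p ⊆ Ẑ` and `n ≥ 0`, the characteristic module
`I_n(E)` is a fractional ideal of `ℤ` (equivalently, a finitely generated `ℤ`-submodule of
`ℚ`) iff (1) `#E_p > n` for all `p` and (2) `#(E_p mod p) > n` for all but finitely many
`p`. -/
theorem In_fg_iff (Ep : ∀ p : Nat.Primes, Set ℤ_[(p : ℕ)])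
    (hcpt : IsCompact (Set.univ.pi Ep)) (n : ℕ) :
    (Submodule.span ℤ (In (Set.univ.pi Ep) n)).FG
      ↔ ((∀ p : Nat.Primes, ∀ h : (Ep p).Finite, n < (Ep p).ncard)
          ∧ {p : Nat.Primes | ¬ n < (PadicInt.toZMod '' Ep p).ncard}.Finite) := by
  classical
  constructor
  · intro hFG
    obtain ⟨d, hd, hle⟩ := (fg_iff_exists _).mp hFG
    have hd0 : ((d:ℕ):ℚ) ≠ 0 := by
      exact_mod_cast hd.ne'
    have hIn : ∀ c ∈ In (Set.univ.pi Ep) n, ∃ m : ℤ, (m:ℚ) * ((d:ℕ):ℚ)⁻¹ = c := by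
      intro c hc
      have := hle (Submodule.subset_span hc)
      rw [Submodule.mem_span_singleton] at this
      obtain ⟨m, hm⟩ := this
      refine ⟨m, ?_⟩
      rw [← hm, zsmul_eq_mul]
    constructor
    · intro p hfin
      by_contra hcon
      push_neg at hcon
      obtain ⟨m, hm⟩ := hIn _ (inv_pow_mem Ep n p hfin hcon d)
      have hp0 : (((p:ℕ):ℚ)) ≠ 0 := by
        exact_mod_cast p.2.ne_zero
      have h1 : (m:ℚ) * ((p:ℕ):ℚ)^d = (d:ℚ) := by
        field_simp at hm
        linarith
      have h2 : (m * (p:ℕ)^d : ℤ) = (d:ℤ) := by exact_mod_cast h1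
      have hdvd : ((p:ℕ):ℤ)^d ∣ (d:ℤ) := Dvd.intro_left m h2
      have hled : ((p:ℕ):ℤ)^d ≤ (d:ℤ) := Int.le_of_dvd (by exact_mod_cast hd) hdvd
      have hled' : (p:ℕ)^d ≤ d := by exact_mod_cast hled
      have := Nat.lt_pow_self (n := d) p.2.one_lt
      omega
    · have hsub : {p : Nat.Primes | ¬ n < (PadicInt.toZMod '' Ep p).ncard}
          ⊆ {p : Nat.Primes | (p:ℕ) ∣ d} := by
        intro p hp
        simp only [Set.mem_setOf_eq, not_lt] at hp
        obtain ⟨m, hm⟩ := hIn _ (inv_mem Ep n p hp)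
        have hp0 : (((p:ℕ):ℚ)) ≠ 0 := by
          exact_mod_cast p.2.ne_zero
        have h1 : (m:ℚ) * ((p:ℕ):ℚ) = (d:ℚ) := by
          field_simp at hm
          linarith
        have h2 : (m * (p:ℕ) : ℤ) = (d:ℤ) := by exact_mod_cast h1
        have hdvd : ((p:ℕ):ℤ) ∣ (d:ℤ) := Dvd.intro_left m h2
        exact Int.ofNat_dvd.mp hdvd
      refine Set.Finite.subset ?_ hsub
      have hfin2 : ({k : ℕ | k ≤ d} : Set ℕ).Finite := Set.finite_Iic d
      have : {p : Nat.Primes | (p:ℕ) ∣ d} ⊆ (Subtype.val : Nat.Primes → ℕ) ⁻¹' {k : ℕ | k ≤ d} :=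
        fun p hp => Nat.le_of_dvd hd hp
      exact Set.Finite.subset (Set.Finite.preimage
        (Set.injOn_of_injective Subtype.coe_injective) hfin2) this
  · rintro ⟨h1, h2⟩
    have hne : ∀ q, (Ep q).Nonempty := by
      intro q
      by_cases hf : (Ep q).Finite
      · have := h1 q hf
        exact Set.nonempty_of_ncard_ne_zero (by omega)
      · exact Set.Infinite.nonempty hf
    have hbound : ∀ p : Nat.Primes, ∃ k : ℕ, ∀ f : ℚ[X],
        (∀ y ∈ Ep p, ‖(aeval ((y:ℚ_[(p:ℕ)]))) f‖ ≤ 1) → f.degree ≤ (n:ℕ) →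
        ‖((f.leadingCoeff : ℚ) : ℚ_[(p:ℕ)])‖ ≤ ((p:ℕ):ℝ)^k := by
      intro p
      have hpts : ∃ g : Fin (n+1) → ℤ_[(p:ℕ)], Function.Injective g ∧ ∀ i, g i ∈ Ep p := by
        apply exists_inj_fun_of_ncard
        by_cases hf : (Ep p).Finite
        · exact Or.inl (h1 p hf)
        · exact Or.inr hf
      obtain ⟨x, hinj, hxm⟩ := hpts
      exact exists_pow_bound n (Ep p) x hxm hinj
    choose k hk using hbound
    set B := h2.toFinset with hB
    set N : ℕ := ∏ p ∈ B, (p:ℕ)^(k p) with hN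
    have hN0 : 0 < N := Finset.prod_pos fun p _ => pow_pos p.2.pos _
    have hNQ : ((N:ℕ):ℚ) ≠ 0 := by exact_mod_cast hN0.ne'
    rw [fg_iff_exists]
    refine ⟨N, hN0, ?_⟩
    rw [Submodule.span_le]
    rintro c ⟨f, hf, hdeg, rfl⟩
    rw [SetLike.mem_coe, Submodule.mem_span_singleton]
    have hrestrict := mem_IntQp_of_mem_IntQ Ep hne hf
    have hnorm : ∀ q : Nat.Primes, ‖(((N:ℚ) * f.leadingCoeff : ℚ) : ℚ_[(q:ℕ)])‖ ≤ 1 := by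
      intro q
      have hcast : (((N:ℚ) * f.leadingCoeff : ℚ) : ℚ_[(q:ℕ)])
          = ((N:ℕ) : ℚ_[(q:ℕ)]) * ((f.leadingCoeff : ℚ) : ℚ_[(q:ℕ)]) := by
        push_cast
        ring
      rw [hcast, norm_mul]
      by_cases hq : q ∈ B
      · obtain ⟨M, hM⟩ : ((q:ℕ))^(k q) ∣ N := Finset.dvd_prod_of_mem _ hq
        have hq0 : ((q:ℕ):ℝ) ≠ 0 := by
          exact_mod_cast q.2.ne_zero
        have hn1 : ‖((N:ℕ) : ℚ_[(q:ℕ)])‖ ≤ ((q:ℕ):ℝ)^(-(k q : ℤ)) := by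
          rw [show ((N:ℕ) : ℚ_[(q:ℕ)]) = (((q:ℕ) : ℚ_[(q:ℕ)]))^(k q) * ((M:ℕ) : ℚ_[(q:ℕ)]) by
            rw [hM]; push_cast; ring]
          rw [norm_mul, norm_p_pow q (k q)]
          calc ((q:ℕ):ℝ)^(-(k q:ℤ)) * ‖((M:ℕ) : ℚ_[(q:ℕ)])‖
              ≤ ((q:ℕ):ℝ)^(-(k q:ℤ)) * 1 := by
                refine mul_le_mul_of_nonneg_left (norm_natCast_le_one q M) ?_
                positivity
            _ = ((q:ℕ):ℝ)^(-(k q:ℤ)) := mul_one _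
        have hn2 := hk q f (hrestrict q) hdeg
        calc ‖((N:ℕ) : ℚ_[(q:ℕ)])‖ * ‖((f.leadingCoeff : ℚ) : ℚ_[(q:ℕ)])‖
            ≤ ((q:ℕ):ℝ)^(-(k q:ℤ)) * ((q:ℕ):ℝ)^(k q) :=
              mul_le_mul hn1 hn2 (norm_nonneg _) (by positivity)
          _ = 1 := by
              rw [← zpow_natCast ((q:ℕ):ℝ) (k q), ← zpow_add₀ hq0]
              simp
      · have hgood : n < (PadicInt.toZMod '' Ep q).ncard := by
          by_contra hcon
          exact hq (h2.mem_toFinset.mpr hcon)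
        obtain ⟨g, hginj, hgm⟩ := exists_inj_fun_of_ncard _ n (Or.inl hgood)
        have hpre : ∀ i, ∃ x ∈ Ep q, PadicInt.toZMod x = g i := fun i => hgm i
        choose x hx1 hx2 using hpre
        have hxinj : Function.Injective (fun i => PadicInt.toZMod (x i)) := by
          intro i j hij
          apply hginj
          rw [← hx2 i, ← hx2 j]
          exact hij
        have hlc := norm_lc_le_one n (Ep q) x hx1 hxinj f (hrestrict q) hdeg
        have hNle : ‖((N:ℕ) : ℚ_[(q:ℕ)])‖ ≤ 1 := norm_natCast_le_one q N
        calc ‖((N:ℕ) : ℚ_[(q:ℕ)])‖ * ‖((f.leadingCoeff : ℚ) : ℚ_[(q:ℕ)])‖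
            ≤ 1 * 1 := mul_le_mul hNle hlc (norm_nonneg _) one_pos.le
          _ = 1 := mul_one 1
    have hpn : ∀ q : Nat.Primes, padicNorm q ((N:ℚ) * f.leadingCoeff) ≤ 1 := by
      intro q
      have := hnorm q
      rw [rat_norm_eq] at this
      exact_mod_cast this
    obtain ⟨m, hm⟩ := exists_int_of_padicNorm_le _ hpn
    refine ⟨m, ?_⟩
    rw [zsmul_eq_mul]
    have : (m:ℚ) = (N:ℚ) * f.leadingCoeff := hm.symm
    rw [this]
    field_simp
end

section
/- Let E_p ⊆ ℤ_p be infinite with a p-ordering (a_n)_{n≥0} (so v_p(∏_{k<n}(a_n − a_k)) = min_{x ∈ E_p} v_p(∏_{k<n}(x − a_k)) for all n ≥ 1, and the a_n are distinct). Then the polynomials f_0 = 1 and f_n(x) = ∏_{k=0}^{n−1} (x − a_k)/(a_n − a_k) for n ≥ 1 form a ℤ_p-module basis of Int(E_p, ℤ_p) = {f ∈ ℚ_p[x] : f(E_p) ⊆ ℤ_p}, with deg f_n = n. -/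
open Polynomial

/-- Divided-difference coefficients. -/
noncomputable def bhCoeff (p : ℕ) [Fact p.Prime] (g : Polynomial ℚ_[p])
    (F : ℕ → Polynomial ℚ_[p]) (a : ℕ → ℤ_[p]) : ℕ → ℚ_[p]
  | m => g.eval ((a m : ℚ_[p])) -
      ∑ n ∈ (Finset.range m).attach,
        bhCoeff p g F a n.1 * (F n.1).eval ((a m : ℚ_[p]))
  decreasing_by exact Finset.mem_range.mp n.2

lemma bhCoeff_eq (p : ℕ) [Fact p.Prime] (g : Polynomial ℚ_[p])
    (F : ℕ → Polynomial ℚ_[p]) (a : ℕ → ℤ_[p]) (m : ℕ) :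
    bhCoeff p g F a m = g.eval ((a m : ℚ_[p])) -
      ∑ n ∈ Finset.range m, bhCoeff p g F a n * (F n).eval ((a m : ℚ_[p])) := by
  rw [bhCoeff, ← Finset.sum_attach (Finset.range m) (fun n => bhCoeff p g F a n * (F n).eval ((a m : ℚ_[p])))]


/-- **Bhargava.** If `E_p ⊆ ℤ_p` is infinite and `(a_n)` is a `p`-ordering of
`E_p` (the minimum of `v_p(∏_{k<n}(x − a_k))` over `x ∈ E_p` is attained at `x = a_n`, i.e.
the norm is maximal there), then `f_0 = 1` and `f_n(x) = ∏_{k<n} (x − a_k)/(a_n − a_k)` form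
a `ℤ_p`-module basis of `Int(E_p, ℤ_p) = {f ∈ ℚ_p[x] : f(E_p) ⊆ ℤ_p}`, with `deg f_n = n`. -/
theorem pOrdering_gives_basis (p : ℕ) [Fact p.Prime] (Ep : Set ℤ_[p]) (hinf : Ep.Infinite)
    (a : ℕ → ℤ_[p]) (ha : ∀ n, a n ∈ Ep) (hinj : Function.Injective a)
    (hord : ∀ n : ℕ, 1 ≤ n → ∀ x ∈ Ep,
      ‖∏ k ∈ Finset.range n, ((x : ℤ_[p]) - a k)‖ ≤ ‖∏ k ∈ Finset.range n, (a n - a k)‖) :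
    letI f : ℕ → Polynomial ℚ_[p] := fun n =>
      ∏ k ∈ Finset.range n,
        Polynomial.C (((a n : ℚ_[p]) - (a k : ℚ_[p]))⁻¹) * (X - Polynomial.C ((a k : ℚ_[p])))
    (∀ n, (f n).degree = (n : ℕ)) ∧
      (∀ n, ∀ x ∈ Ep, ‖(f n).eval ((x : ℚ_[p]))‖ ≤ 1) ∧
      ∀ g : Polynomial ℚ_[p], (∀ x ∈ Ep, ‖g.eval ((x : ℚ_[p]))‖ ≤ 1) →
        ∃! c : ℕ →₀ ℤ_[p], g = c.sum fun n b => (b : ℚ_[p]) • f n := by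
  set f : ℕ → Polynomial ℚ_[p] := fun n =>
      ∏ k ∈ Finset.range n,
        Polynomial.C (((a n : ℚ_[p]) - (a k : ℚ_[p]))⁻¹) * (X - Polynomial.C ((a k : ℚ_[p]))) with hf
  -- basic nonvanishing
  have hsub : ∀ {m k : ℕ}, m ≠ k → ((a m : ℚ_[p]) - (a k : ℚ_[p])) ≠ 0 := by
    intro m k hmk h
    apply hmk
    apply hinj
    exact Subtype.coe_injective (sub_eq_zero.mp h)
  -- degrees
  have hdeg : ∀ n, (f n).degree = (n : ℕ) := by
    intro n
    have : ∀ k ∈ Finset.range n,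
        (Polynomial.C (((a n : ℚ_[p]) - (a k : ℚ_[p]))⁻¹) * (X - Polynomial.C ((a k : ℚ_[p])))).degree = 1 := by
      intro k hk
      rw [degree_mul, degree_C (inv_ne_zero (hsub (Finset.mem_range.mp hk).ne')), degree_X_sub_C]
      simp
    rw [degree_prod]
    rw [Finset.sum_congr rfl this]
    simp [Finset.sum_const]
  have hfne : ∀ n, f n ≠ 0 := by
    intro n h
    have := hdeg n
    rw [h, degree_zero] at this
    exact (by simp at this)
  -- evaluation formula
  have heval : ∀ n (x : ℚ_[p]), (f n).eval x
      = ∏ k ∈ Finset.range n, (((a n : ℚ_[p]) - (a k : ℚ_[p]))⁻¹ * (x - (a k : ℚ_[p]))) := by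
    intro n x
    simp [f, eval_prod]
  -- norm bound on Ep
  have hbound : ∀ n, ∀ x ∈ Ep, ‖(f n).eval ((x : ℚ_[p]))‖ ≤ 1 := by
    intro n x hx
    rcases Nat.eq_zero_or_pos n with rfl | hn
    · simp [heval]
    · have hA := hord n hn x hx
      have hBne : (∏ k ∈ Finset.range n, ((a n : ℤ_[p]) - a k)) ≠ 0 := by
        apply Finset.prod_ne_zero_iff.mpr
        intro k hk h
        exact hsub (Finset.mem_range.mp hk).ne' (by push_cast [sub_eq_zero.mp h]; ring)
      have e : (f n).eval ((x : ℚ_[p]))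
          = ((∏ k ∈ Finset.range n, ((x : ℤ_[p]) - a k) : ℤ_[p]) : ℚ_[p])
            * (((∏ k ∈ Finset.range n, ((a n : ℤ_[p]) - a k) : ℤ_[p]) : ℚ_[p]))⁻¹ := by
        have coeprod : ∀ (s : Finset ℕ) (u : ℕ → ℤ_[p]),
            ((∏ k ∈ s, u k : ℤ_[p]) : ℚ_[p]) = ∏ k ∈ s, ((u k : ℤ_[p]) : ℚ_[p]) := by
          intro s u
          induction s using Finset.induction with
          | empty => simp
          | insert _ _ h ih => rw [Finset.prod_insert h, Finset.prod_insert h, PadicInt.coe_mul, ih]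
        rw [heval, coeprod, coeprod, Finset.prod_mul_distrib, ← Finset.prod_inv_distrib]
        push_cast
        ring
      rw [e, norm_mul, norm_inv, ← PadicInt.norm_def, ← PadicInt.norm_def, ← div_eq_mul_inv]
      exact div_le_one_of_le₀ hA (norm_nonneg _)
  refine ⟨hdeg, hbound, ?_⟩
  intro g hg
  classical
  set c : ℕ → ℚ_[p] := bhCoeff p g f a with hcdef
  have hceq : ∀ m, c m = g.eval ((a m : ℚ_[p])) -
      ∑ n ∈ Finset.range m, c n * (f n).eval ((a m : ℚ_[p])) :=
    fun m => bhCoeff_eq p g f a m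
  have hval0 : ∀ {n m : ℕ}, m < n → (f n).eval ((a m : ℚ_[p])) = 0 := by
    intro n m hmn
    rw [heval]
    apply Finset.prod_eq_zero (Finset.mem_range.mpr hmn)
    simp
  have hval1 : ∀ n, (f n).eval ((a n : ℚ_[p])) = 1 := by
    intro n
    rw [heval]
    apply Finset.prod_eq_one
    intro k hk
    exact inv_mul_cancel₀ (hsub (Finset.mem_range.mp hk).ne')
  have hcnorm : ∀ m, ‖c m‖ ≤ 1 := by
    intro m
    induction m using Nat.strong_induction_on with
    | _ m ih =>
      rw [hceq]
      have tri := IsUltrametricDist.norm_add_le_max (g.eval ((a m : ℚ_[p])))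
        (-(∑ n ∈ Finset.range m, c n * (f n).eval ((a m : ℚ_[p]))))
      rw [← sub_eq_add_neg, norm_neg] at tri
      refine tri.trans (max_le (hg _ (ha m)) ?_)
      refine IsUltrametricDist.norm_sum_le_of_forall_le_of_nonneg zero_le_one ?_
      intro n hn
      rw [norm_mul]
      exact mul_le_one₀ (ih n (Finset.mem_range.mp hn)) (norm_nonneg _) (hbound n (a m) (ha m))
  set N := g.natDegree with hN
  -- the representation over range (N+1)
  have hrepr : g = ∑ n ∈ Finset.range (N+1), c n • f n := by
    have hzero : ∀ m, m < N + 1 →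
        (g - ∑ n ∈ Finset.range (N+1), c n • f n).eval ((a m : ℚ_[p])) = 0 := by
      intro m hm
      rw [eval_sub, eval_finset_sum]
      have split : ∑ n ∈ Finset.range (N+1), (c n • f n).eval ((a m : ℚ_[p]))
          = ∑ n ∈ Finset.range (m+1), (c n • f n).eval ((a m : ℚ_[p])) := by
        symm
        apply Finset.sum_subset (Finset.range_subset_range.mpr hm)
        intro n hn hnm
        have hmn : m < n := by
          have := Finset.mem_range.not.mp hnm
          omega
        rw [eval_smul, hval0 hmn, smul_zero]
      rw [split, Finset.sum_range_succ, eval_smul, hval1 m, smul_eq_mul, mul_one]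
      have : ∀ n ∈ Finset.range m, (c n • f n).eval ((a m : ℚ_[p]))
          = c n * (f n).eval ((a m : ℚ_[p])) := by
        intro n hn
        rw [eval_smul, smul_eq_mul]
      rw [Finset.sum_congr rfl this]
      rw [hceq m]
      ring
    have hdegh : (g - ∑ n ∈ Finset.range (N+1), c n • f n).natDegree < N + 1 := by
      have h1 : (g : Polynomial ℚ_[p]).degree ≤ (N : WithBot ℕ) := degree_le_natDegree
      have h2 : (∑ n ∈ Finset.range (N+1), c n • f n).degree ≤ (N : WithBot ℕ) := by
        apply Polynomial.degree_sum_le _ _ |>.trans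
        apply Finset.sup_le
        intro n hn
        refine (Polynomial.degree_smul_le _ _).trans ?_
        rw [hdeg n]
        have hnN : n ≤ N := by have := Finset.mem_range.mp hn; omega
        exact_mod_cast hnN
      have := (Polynomial.degree_sub_le _ _).trans (max_le h1 h2)
      have := Polynomial.natDegree_le_iff_degree_le.mpr this
      omega
    have := Polynomial.eq_zero_of_natDegree_lt_card_of_eval_eq_zero
      (g - ∑ n ∈ Finset.range (N+1), c n • f n)
      (f := fun i : Fin (N+1) => ((a i : ℚ_[p])))
      (fun i j hij => Fin.val_injective (hinj (Subtype.coe_injective hij)))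
      (fun i => hzero i i.2) (by simpa using hdegh)
    exact sub_eq_zero.mp this
  -- build the Finsupp of integral coefficients
  set C0 : ℕ → ℤ_[p] := fun n => if n < N + 1 then ⟨c n, hcnorm n⟩ else 0 with hC0
  set Cf : ℕ →₀ ℤ_[p] := Finsupp.onFinset (Finset.range (N+1)) C0
    (fun n hn => Finset.mem_range.mpr (by
      by_contra hcon
      exact hn (by simp [hC0, show ¬ n ≤ N by omega]))) with hCf
  have hCfval : ∀ n, n < N + 1 → ((Cf n : ℚ_[p])) = c n := by
    intro n hn
    simp only [hCf, Finsupp.onFinset_apply, hC0, if_pos hn]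
    exact congrArg (fun z : ℤ_[p] => (z : ℚ_[p])) (if_pos hn : (if n < N + 1 then (⟨c n, hcnorm n⟩ : ℤ_[p]) else (0 : ℤ_[p])) = (⟨c n, hcnorm n⟩ : ℤ_[p]))
  have hCfsum : (Cf.sum fun n b => (b : ℚ_[p]) • f n)
      = ∑ n ∈ Finset.range (N+1), ((Cf n : ℚ_[p])) • f n := by
    apply Finsupp.sum_of_support_subset
    · exact Finsupp.support_onFinset_subset
    · intro n hn
      simp
  have hex : g = Cf.sum fun n b => (b : ℚ_[p]) • f n := by
    rw [hCfsum, hrepr]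
    apply Finset.sum_congr rfl
    intro n hn
    rw [hCfval n (Finset.mem_range.mp hn)]
  -- uniqueness of representations
  have huniq : ∀ d e : ℕ →₀ ℤ_[p],
      (d.sum fun n b => (b : ℚ_[p]) • f n) = (e.sum fun n b => (b : ℚ_[p]) • f n) → d = e := by
    intro d e hde
    have hsub' : ((d - e).sum fun n b => (b : ℚ_[p]) • f n) = 0 := by
      rw [Finsupp.sum_sub_index]
      · rw [hde, sub_self]
      · intro n b1 b2
        push_cast
        rw [sub_smul]
    by_contra hne
    have hwne : d - e ≠ 0 := fun h' => hne (sub_eq_zero.mp h')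
    set w := d - e with hw
    have hsupp : w.support.Nonempty := Finsupp.support_nonempty_iff.mpr hwne
    set M := w.support.max' hsupp with hM
    have hMmem : M ∈ w.support := w.support.max'_mem hsupp
    have hcoeff : ((w.sum fun n b => (b : ℚ_[p]) • f n)).coeff M = 0 := by
      rw [hsub', coeff_zero]
    rw [Finsupp.sum] at hcoeff
    rw [Polynomial.finset_sum_coeff] at hcoeff
    have hsingle : ∑ n ∈ w.support, (((w n : ℚ_[p])) • f n).coeff M
        = ((w M : ℚ_[p])) * (f M).coeff M := by
      rw [Finset.sum_eq_single M]
      · rw [Polynomial.coeff_smul, smul_eq_mul]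
      · intro n hn hnM
        have hnlt : n < M := lt_of_le_of_ne (w.support.le_max' n hn) hnM
        rw [Polynomial.coeff_smul, Polynomial.coeff_eq_zero_of_degree_lt, smul_zero]
        rw [hdeg n]
        exact_mod_cast hnlt
      · intro hM'
        exact absurd hMmem hM'
    rw [hsingle] at hcoeff
    have h1 : ((w M : ℚ_[p])) ≠ 0 := by
      have h0 : w M ≠ 0 := Finsupp.mem_support_iff.mp hMmem
      simp only [ne_eq, PadicInt.coe_eq_zero]
      exact h0
    have h2 : (f M).coeff M ≠ 0 := by
      have hnd : (f M).natDegree = M := natDegree_eq_of_degree_eq_some (hdeg M)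
      intro h'
      apply hfne M
      apply Polynomial.leadingCoeff_eq_zero.mp
      rw [Polynomial.leadingCoeff, hnd]
      exact h'
    exact (mul_ne_zero h1 h2) hcoeff
  exact ⟨Cf, hex, fun c' hc' => huniq c' Cf (hc' ▸ hex ▸ rfl)⟩
end
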